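/- arXiv:2107.11735 — 4 statements merged into one kernel-verified Lean document; each statement's English description precedes it below -/
import Mathlib

section
/- The function X_R is strictly decreasing on (0,∞), i.e. X_R′(y) < 0 for every y > 0; equivalently, J_R is strictly convex on (0,∞). -/
open MeasureTheory Set


/-- strict integral comparison -/
lemma my_intlt (f g : ℝ → ℝ) (s : Set ℝ) (hs : MeasurableSet s) (hs0 : volume s ≠ 0)
    (hf : IntegrableOn f s volume) (hg : IntegrableOn g s volume)
    (hlt : ∀ x ∈ s, f x < g x) :
    (∫ x in s, f x) < ∫ x in s, g x := by
  have hint : IntegrableOn (fun x => g x - f x) s volume := hg.sub hf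
  have hpos : 0 < ∫ x in s, (g x - f x) := by
    rw [setIntegral_pos_iff_support_of_nonneg_ae ?_ hint]
    · have hsub : s ⊆ Function.support (fun x => g x - f x) := by
        intro x hx
        simp only [Function.mem_support]
        exact sub_ne_zero_of_ne (hlt x hx).ne'
      have : s ⊆ Function.support (fun x => g x - f x) ∩ s := fun x hx => ⟨hsub hx, hx⟩
      exact lt_of_lt_of_le (by exact (pos_iff_ne_zero).2 hs0) (measure_mono this)
    · refine (ae_restrict_iff' hs).2 (Filter.Eventually.of_forall ?_)
      intro x hx
      exact sub_nonneg.2 (hlt x hx).le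
  have := integral_sub hg hf
  rw [this] at hpos
  linarith

/-- change of variables for Ioo 0 y -/
lemma my_cov₁ (f : ℝ → ℝ) (y : ℝ) (hy : 0 < y) :
    (∫ t in Ioo (0:ℝ) 1, f (y * t)) = y⁻¹ * ∫ η in Ioo 0 y, f η := by
  have key : ∀ t : ℝ, (Ioo (0:ℝ) y).indicator f (y * t)
      = (Ioo (0:ℝ) 1).indicator (fun t => f (y * t)) t := by
    intro t
    by_cases ht : t ∈ Ioo (0:ℝ) 1
    · rw [Set.indicator_of_mem ht, Set.indicator_of_mem]
      exact ⟨mul_pos hy ht.1, by simpa using (mul_lt_iff_lt_one_right hy).2 ht.2⟩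
    · rw [Set.indicator_of_notMem ht, Set.indicator_of_notMem]
      intro hmem
      refine ht ⟨by nlinarith [hmem.1], (mul_lt_iff_lt_one_right hy).1 (by simpa using hmem.2)⟩
  have h2 := MeasureTheory.Measure.integral_comp_mul_left ((Ioo (0:ℝ) y).indicator f) y
  simp only [key] at h2
  rw [integral_indicator measurableSet_Ioo, integral_indicator measurableSet_Ioo] at h2
  rw [h2, abs_of_pos (inv_pos.2 hy), smul_eq_mul]

/-- change of variables for Ioi y -/
lemma my_cov₂ (f : ℝ → ℝ) (y : ℝ) (hy : 0 < y) :
    (∫ t in Ioi (1:ℝ), f (y * t)) = y⁻¹ * ∫ η in Ioi y, f η := by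
  have key : ∀ t : ℝ, (Ioi y).indicator f (y * t)
      = (Ioi (1:ℝ)).indicator (fun t => f (y * t)) t := by
    intro t
    by_cases ht : t ∈ Ioi (1:ℝ)
    · rw [Set.indicator_of_mem ht, Set.indicator_of_mem]
      exact (lt_mul_iff_one_lt_right hy).2 ht
    · rw [Set.indicator_of_notMem ht, Set.indicator_of_notMem]
      intro hmem
      exact ht ((lt_mul_iff_one_lt_right hy).1 hmem)
  have h2 := MeasureTheory.Measure.integral_comp_mul_left ((Ioi y).indicator f) y
  simp only [key] at h2
  rw [integral_indicator measurableSet_Ioi, integral_indicator measurableSet_Ioi] at h2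
  rw [h2, abs_of_pos (inv_pos.2 hy), smul_eq_mul]

/-- integrability transfer for Ioo -/
lemma my_icov₁ (f : ℝ → ℝ) (y : ℝ) (hy : 0 < y) (hf : IntegrableOn f (Ioo 0 y)) :
    IntegrableOn (fun t => f (y * t)) (Ioo (0:ℝ) 1) := by
  have key : ∀ t : ℝ, (Ioo (0:ℝ) y).indicator f (y * t)
      = (Ioo (0:ℝ) 1).indicator (fun t => f (y * t)) t := by
    intro t
    by_cases ht : t ∈ Ioo (0:ℝ) 1
    · rw [Set.indicator_of_mem ht, Set.indicator_of_mem]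
      exact ⟨mul_pos hy ht.1, by simpa using (mul_lt_iff_lt_one_right hy).2 ht.2⟩
    · rw [Set.indicator_of_notMem ht, Set.indicator_of_notMem]
      intro hmem
      refine ht ⟨by nlinarith [hmem.1], (mul_lt_iff_lt_one_right hy).1 (by simpa using hmem.2)⟩
  rw [← integrable_indicator_iff measurableSet_Ioo] at hf ⊢
  have := hf.comp_mul_left' (R := y) hy.ne'
  simpa only [key] using this

lemma my_rep₁ (g : ℝ → ℝ) (p y : ℝ) (hy : 0 < y) :
    (∫ t in Ioo (0:ℝ) 1, t ^ p * g (y * t)) = y ^ (-p) * (y⁻¹ * ∫ η in Ioo 0 y, η ^ p * g η) := by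
  rw [← my_cov₁ (fun η => η ^ p * g η) y hy, ← integral_const_mul]
  refine setIntegral_congr_fun measurableSet_Ioo (fun t ht => ?_)
  have h1 : (y * t) ^ p = y ^ p * t ^ p := Real.mul_rpow hy.le ht.1.le
  have h2 : y ^ (-p) * y ^ p = 1 := by
    rw [← Real.rpow_add hy, neg_add_cancel, Real.rpow_zero]
  rw [h1]
  linear_combination (-(t ^ p * g (y * t))) * h2

lemma my_rep₂ (g : ℝ → ℝ) (p y : ℝ) (hy : 0 < y) :
    (∫ t in Ioi (1:ℝ), t ^ p * g (y * t)) = y ^ (-p) * (y⁻¹ * ∫ η in Ioi y, η ^ p * g η) := by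
  rw [← my_cov₂ (fun η => η ^ p * g η) y hy, ← integral_const_mul]
  refine setIntegral_congr_fun measurableSet_Ioi (fun t ht => ?_)
  have ht0 : (0:ℝ) < t := lt_trans one_pos ht
  have h1 : (y * t) ^ p = y ^ p * t ^ p := Real.mul_rpow hy.le ht0.le
  have h2 : y ^ (-p) * y ^ p = 1 := by
    rw [← Real.rpow_add hy, neg_add_cancel, Real.rpow_zero]
  rw [h1]
  linear_combination (-(t ^ p * g (y * t))) * h2

lemma my_irep₁ (g : ℝ → ℝ) (p y : ℝ) (hy : 0 < y)
    (h : IntegrableOn (fun η => η ^ p * g η) (Ioo 0 y)) :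
    IntegrableOn (fun t => t ^ p * g (y * t)) (Ioo (0:ℝ) 1) := by
  have h1 := (my_icov₁ (fun η => η ^ p * g η) y hy h).const_mul (y ^ (-p))
  refine (integrableOn_congr_fun (fun t ht => ?_) measurableSet_Ioo).1 h1
  have hxy : (y * t) ^ p = y ^ p * t ^ p := Real.mul_rpow hy.le ht.1.le
  have h2 : y ^ (-p) * y ^ p = 1 := by
    rw [← Real.rpow_add hy, neg_add_cancel, Real.rpow_zero]
  rw [hxy]
  linear_combination (t ^ p * g (y * t)) * h2

lemma my_grad (u u' : ℝ → ℝ) (hu_conc : StrictConcaveOn ℝ (Set.Ici 0) u)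
    (hu_deriv : ∀ c : ℝ, 0 < c → HasDerivAt u (u' c) c) :
    ∀ c d : ℝ, 0 ≤ c → 0 < d → c ≠ d → u c < u d + u' d * (c - d) := by
  intro c d hc hd hne
  rcases lt_or_gt_of_ne hne with h | h
  · have hs := hu_conc.lt_slope_of_hasDerivAt (Set.mem_Ici.2 hc) (Set.mem_Ici.2 hd.le) h
      (hu_deriv d hd)
    rw [slope_def_field] at hs
    have hdc : 0 < d - c := by linarith
    rw [lt_div_iff₀ hdc] at hs
    nlinarith
  · have hs := hu_conc.slope_lt_of_hasDerivAt (Set.mem_Ici.2 hd.le) (Set.mem_Ici.2 (hd.le.trans h.le)) h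
      (hu_deriv d hd)
    rw [slope_def_field] at hs
    have hcd : 0 < c - d := by linarith
    rw [div_lt_iff₀ hcd] at hs
    nlinarith

section envelope
variable {u u' I utld : ℝ → ℝ}
variable (hu_conc : StrictConcaveOn ℝ (Set.Ici 0) u)
variable (hu_deriv : ∀ c : ℝ, 0 < c → HasDerivAt u (u' c) c)
variable (hI_pos : ∀ y : ℝ, 0 < y → 0 < I y)
variable (hI_left : ∀ y : ℝ, 0 < y → u' (I y) = y)
variable (hI_anti : StrictAntiOn I (Set.Ioi 0))
variable (hutld : ∀ y : ℝ, 0 < y → utld y = u (I y) - y * I y)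

include hu_conc hu_deriv hI_pos hI_left hI_anti hutld in
lemma my_env : ∀ y s : ℝ, 0 < y → 0 < s → y ≠ s → u (I y) - s * I y < utld s := by
  intro y s hy hs hne
  have hIne : I y ≠ I s := by
    intro hIeq
    exact hne (hI_anti.injOn (Set.mem_Ioi.2 hy) (Set.mem_Ioi.2 hs) hIeq)
  have h := my_grad u u' hu_conc hu_deriv (I y) (I s) (hI_pos y hy).le (hI_pos s hs) hIne
  rw [hI_left s hs] at h
  rw [hutld s hs]
  nlinarith

include hu_conc hu_deriv hI_pos hI_left hI_anti hutld in
lemma my_env_le : ∀ y s : ℝ, 0 < y → 0 < s → u (I y) - s * I y ≤ utld s := by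
  intro y s hy hs
  rcases eq_or_ne y s with rfl | hne
  · rw [hutld y hy]
  · exact (my_env hu_conc hu_deriv hI_pos hI_left hI_anti hutld y s hy hs hne).le

include hu_conc hu_deriv hI_pos hI_left hI_anti hutld in
lemma my_utld_sconv : StrictConvexOn ℝ (Set.Ioi 0) utld := by
  refine ⟨convex_Ioi 0, ?_⟩
  intro x hx z hz hne a b ha hb hab
  simp only [smul_eq_mul]
  set m := a * x + b * z with hm_def
  have hx0 : (0:ℝ) < x := hx
  have hz0 : (0:ℝ) < z := hz
  have hm : 0 < m := by positivity
  have hmx : m ≠ x := by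
    intro hmx
    apply hne
    have hbz : b * z = b * x := by nlinarith [hmx]
    exact (mul_left_cancel₀ hb.ne' hbz).symm
  have hmz : m ≠ z := by
    intro hmz
    apply hne
    have haz : a * x = a * z := by nlinarith [hmz]
    exact mul_left_cancel₀ ha.ne' haz
  have h1 := my_env hu_conc hu_deriv hI_pos hI_left hI_anti hutld m x hm hx0 hmx
  have h2 := my_env hu_conc hu_deriv hI_pos hI_left hI_anti hutld m z hm hz0 hmz
  have hm' : utld m = u (I m) - m * I m := hutld m hm
  have key : utld m = a * (u (I m) - x * I m) + b * (u (I m) - z * I m) := by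
    rw [hm']
    linear_combination (-(u (I m))) * hab + (-(I m)) * hm_def
  nlinarith [mul_lt_mul_of_pos_left h1 ha, mul_lt_mul_of_pos_left h2 hb]

include hu_conc hu_deriv hI_pos hI_left hI_anti hutld in
lemma my_utld_anti : ∀ y s : ℝ, 0 < y → y ≤ s → utld s ≤ utld y := by
  intro y s hy hs
  have hs0 : 0 < s := lt_of_lt_of_le hy hs
  have h := my_env_le hu_conc hu_deriv hI_pos hI_left hI_anti hutld s y hs0 hy
  have h2 : utld s = u (I s) - s * I s := hutld s hs0
  nlinarith [hI_pos s hs0]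

include hu_conc hu_deriv hI_pos hI_left hI_anti hutld in
lemma my_utld_lower : ∀ y s : ℝ, 0 < y → 0 < s → utld y - I y * (s - y) ≤ utld s := by
  intro y s hy hs
  have h := my_env_le hu_conc hu_deriv hI_pos hI_left hI_anti hutld y s hy hs
  have h2 : utld y = u (I y) - y * I y := hutld y hy
  nlinarith

end envelope

section deriv
variable {u u' I utld : ℝ → ℝ}
variable (hu_conc : StrictConcaveOn ℝ (Set.Ici 0) u)
variable (hu_deriv : ∀ c : ℝ, 0 < c → HasDerivAt u (u' c) c)
variable (hI_pos : ∀ y : ℝ, 0 < y → 0 < I y)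
variable (hI_left : ∀ y : ℝ, 0 < y → u' (I y) = y)
variable (hI_anti : StrictAntiOn I (Set.Ioi 0))
variable (hI_cont : ContinuousOn I (Set.Ioi 0))
variable (hutld : ∀ y : ℝ, 0 < y → utld y = u (I y) - y * I y)

include hu_conc hu_deriv hI_pos hI_left hI_anti hI_cont hutld in
lemma my_utld_deriv : ∀ y : ℝ, 0 < y → HasDerivAt utld (-(I y)) y := by
  intro y hy
  have hlow := my_utld_lower hu_conc hu_deriv hI_pos hI_left hI_anti hutld
  rw [hasDerivAt_iff_tendsto_slope]
  have hIat : ContinuousAt I y := hI_cont.continuousAt (Ioi_mem_nhds hy)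
  have hItend : Filter.Tendsto (fun s => -(I s)) (nhdsWithin y {y}ᶜ) (nhds (-(I y))) :=
    (hIat.neg.tendsto).mono_left nhdsWithin_le_nhds
  have hmin : Filter.Tendsto (fun s => min (-(I y)) (-(I s))) (nhdsWithin y {y}ᶜ)
      (nhds (-(I y))) := by
    have := (tendsto_const_nhds (x := -(I y)) (f := nhdsWithin y ({y}ᶜ : Set ℝ))).min hItend
    simpa using this
  have hmax : Filter.Tendsto (fun s => max (-(I y)) (-(I s))) (nhdsWithin y {y}ᶜ)
      (nhds (-(I y))) := by
    have := (tendsto_const_nhds (x := -(I y)) (f := nhdsWithin y ({y}ᶜ : Set ℝ))).max hItend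
    simpa using this
  refine tendsto_of_tendsto_of_tendsto_of_le_of_le' hmin hmax ?_ ?_
  · -- min ≤ slope
    have hev : ∀ᶠ s in nhdsWithin y {y}ᶜ, 0 < s :=
      Filter.Eventually.filter_mono nhdsWithin_le_nhds (eventually_gt_nhds hy)
    have hne : ∀ᶠ s in nhdsWithin y {y}ᶜ, s ≠ y := by
      filter_upwards [self_mem_nhdsWithin] with s hs
      exact hs
    filter_upwards [hev, hne] with s hs hsne
    rw [slope_def_field]
    rcases lt_or_gt_of_ne hsne with h | h
    · -- s < y : slope ≥ -(I s)
      refine le_trans (min_le_right _ _) ?_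
      have hb := hlow s y hs hy
      have hys : s - y < 0 := by linarith
      rw [le_div_iff_of_neg hys]
      nlinarith
    · -- s > y : slope ≥ -(I y)
      refine le_trans (min_le_left _ _) ?_
      have hb := hlow y s hy hs
      have hys : 0 < s - y := by linarith
      rw [le_div_iff₀ hys]
      nlinarith
  · -- slope ≤ max
    have hev : ∀ᶠ s in nhdsWithin y {y}ᶜ, 0 < s :=
      Filter.Eventually.filter_mono nhdsWithin_le_nhds (eventually_gt_nhds hy)
    have hne : ∀ᶠ s in nhdsWithin y {y}ᶜ, s ≠ y := by
      filter_upwards [self_mem_nhdsWithin] with s hs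
      exact hs
    filter_upwards [hev, hne] with s hs hsne
    rw [slope_def_field]
    rcases lt_or_gt_of_ne hsne with h | h
    · -- s < y : slope ≤ -(I y)
      refine le_trans ?_ (le_max_left _ _)
      have hb := hlow y s hy hs
      have hys : s - y < 0 := by linarith
      rw [div_le_iff_of_neg hys]
      nlinarith
    · -- s > y : slope ≤ -(I s)
      refine le_trans ?_ (le_max_right _ _)
      have hb := hlow s y hs hy
      have hys : 0 < s - y := by linarith
      rw [div_le_iff₀ hys]
      nlinarith

end deriv

section int0
variable {u u' I utld : ℝ → ℝ} {n₂ : ℝ}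
variable (hn₂0 : n₂ < 0)
variable (hu_conc : StrictConcaveOn ℝ (Set.Ici 0) u)
variable (hu_deriv : ∀ c : ℝ, 0 < c → HasDerivAt u (u' c) c)
variable (hI_pos : ∀ y : ℝ, 0 < y → 0 < I y)
variable (hI_left : ∀ y : ℝ, 0 < y → u' (I y) = y)
variable (hI_anti : StrictAntiOn I (Set.Ioi 0))
variable (hI_cont : ContinuousOn I (Set.Ioi 0))
variable (hutld : ∀ y : ℝ, 0 < y → utld y = u (I y) - y * I y)
variable (hI_int : ∀ y : ℝ, 0 < y →
      IntegrableOn (fun η => η ^ (-n₂) * I η) (Set.Ioo 0 y) volume)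

include hn₂0 hu_conc hu_deriv hI_pos hI_left hI_anti hI_cont hutld hI_int in
lemma my_utld_int0 (y : ℝ) (hy : 0 < y) :
    IntegrableOn (fun η => η ^ (-n₂ - 1) * utld η) (Set.Ioo 0 y) volume := by
  have hm : (0:ℝ) < -n₂ := by linarith
  have hud := my_utld_deriv hu_conc hu_deriv hI_pos hI_left hI_anti hI_cont hutld
  have hucont : ContinuousOn utld (Set.Ioi 0) := fun x hx =>
    (hud x hx).continuousAt.continuousWithinAt
  have hanti := my_utld_anti hu_conc hu_deriv hI_pos hI_left hI_anti hutld
  have hpow_cont : ∀ p : ℝ, ContinuousOn (fun x : ℝ => x ^ p) (Set.Ioi 0) := fun p x hx =>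
    (Real.continuousAt_rpow_const x p (Or.inl (ne_of_gt hx))).continuousWithinAt
  set g : ℝ → ℝ := fun η => η ^ (-n₂ - 1) * utld η with hg_def
  have hg_cont : ContinuousOn g (Set.Ioi 0) := (hpow_cont (-n₂ - 1)).mul hucont
  set c : ℕ → ℝ := fun i => y / ((i : ℝ) + 2) with hc_def
  have hc_pos : ∀ i, 0 < c i := fun i => div_pos hy (by positivity)
  have hc_le : ∀ i, c i ≤ y := fun i => by
    rw [hc_def]
    exact div_le_self hy.le (by push_cast; linarith [Nat.cast_nonneg (α := ℝ) i])
  have hc_tend : Filter.Tendsto c Filter.atTop (nhds 0) := by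
    apply Filter.Tendsto.div_atTop (tendsto_const_nhds)
    exact Filter.tendsto_atTop_add_const_right _ 2 tendsto_natCast_atTop_atTop
  have hfi : ∀ i, IntegrableOn g (Set.Ioc (c i) y) volume := by
    intro i
    have hsub : Set.Icc (c i) y ⊆ Set.Ioi 0 := fun x hx => lt_of_lt_of_le (hc_pos i) hx.1
    exact ((hg_cont.mono hsub).integrableOn_Icc).mono_set Set.Ioc_subset_Icc_self
  set KI : ℝ := ∫ η in Set.Ioo 0 (y+1), η ^ (-n₂) * I η with hKI_def
  have hKr_int : IntegrableOn (fun x : ℝ => x ^ (-n₂ - 1)) (Set.Ioc 0 y) volume := by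
    have := intervalIntegral.intervalIntegrable_rpow' (a := 0) (b := y) (r := -n₂ - 1) (by linarith)
    rwa [intervalIntegrable_iff_integrableOn_Ioc_of_le hy.le] at this
  set Kr : ℝ := ∫ x in Set.Ioc (0:ℝ) y, x ^ (-n₂ - 1) with hKr_def
  set bigK : ℝ := (-n₂)⁻¹ * KI + |utld y| * Kr with hbigK_def
  have hbound : ∀ i, (∫ x in Set.Ioc (c i) y, ‖g x‖) ≤ bigK := by
    intro i
    set ε := c i with hε_def
    have hε : 0 < ε := hc_pos i
    have hεy : ε ≤ y := hc_le i
    have hsub : Set.uIcc ε y ⊆ Set.Ioi 0 := by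
      rw [Set.uIcc_of_le hεy]
      exact fun x hx => lt_of_lt_of_le hε hx.1
    set A : ℝ → ℝ := fun x => x ^ (-n₂ - 1) * (utld x - utld y) with hA_def
    set B : ℝ → ℝ := fun x => (-n₂)⁻¹ * (x ^ (-n₂) * I x) with hB_def
    have hAint : IntervalIntegrable A volume ε y :=
      (((hpow_cont (-n₂ - 1)).mono hsub).mul
        ((hucont.mono hsub).sub continuousOn_const)).intervalIntegrable
    have hBint : IntervalIntegrable B volume ε y :=
      (continuousOn_const.mul (((hpow_cont (-n₂)).mono hsub).mul
        (hI_cont.mono hsub))).intervalIntegrable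
    set F : ℝ → ℝ := fun x => (-n₂)⁻¹ * (x ^ (-n₂) * (utld x - utld y)) with hF_def
    have hder : ∀ x ∈ Set.uIcc ε y, HasDerivAt F (A x - B x) x := by
      intro x hx
      have hx0 : (0:ℝ) < x := hsub hx
      have hpow := Real.hasDerivAt_rpow_const (x := x) (p := -n₂) (Or.inl hx0.ne')
      have hu2 := (hud x hx0).sub_const (utld y)
      have h3 := (hpow.mul hu2).const_mul ((-n₂)⁻¹)
      refine h3.congr_deriv (Eq.symm ?_)
      have hne : -n₂ ≠ 0 := by linarith
      have hcancel : (-n₂)⁻¹ * (-n₂) = 1 := inv_mul_cancel₀ hne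
      show x ^ (-n₂ - 1) * (utld x - utld y) - (-n₂)⁻¹ * (x ^ (-n₂) * I x) = _
      linear_combination (-(x ^ (-n₂ - 1) * (utld x - utld y))) * (inv_mul_cancel₀ (by linarith : -n₂ ≠ 0))
    have hFTC := intervalIntegral.integral_eq_sub_of_hasDerivAt hder (hAint.sub hBint)
    rw [intervalIntegral.integral_sub hAint hBint] at hFTC
    have hFy : F y = 0 := by rw [hF_def]; simp
    have hFε : 0 ≤ F ε := by
      have h1 : 0 ≤ utld ε - utld y := sub_nonneg.2 (hanti ε y hε hεy)
      have h2 : (0:ℝ) ≤ ε ^ (-n₂) := Real.rpow_nonneg hε.le _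
      positivity
    -- ∫ A ≤ ∫ B over ε..y
    have hAB : (∫ x in ε..y, A x) ≤ ∫ x in ε..y, B x := by
      rw [hFy] at hFTC; linarith
    -- ∫ B ≤ (-n₂)⁻¹ * KI
    have hBle : (∫ x in ε..y, B x) ≤ (-n₂)⁻¹ * KI := by
      rw [hB_def]
      have : (∫ x in ε..y, (-n₂)⁻¹ * (x ^ (-n₂) * I x)) =
          (-n₂)⁻¹ * ∫ x in ε..y, x ^ (-n₂) * I x := by
        exact intervalIntegral.integral_const_mul _ _
      rw [this]
      have hle2 : (∫ x in ε..y, x ^ (-n₂) * I x) ≤ KI := by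
        rw [intervalIntegral.integral_of_le hεy, hKI_def]
        refine setIntegral_mono_set (hI_int (y+1) (by linarith)) ?_ ?_
        · refine (ae_restrict_iff' measurableSet_Ioo).2 (Filter.Eventually.of_forall ?_)
          intro x hx
          exact mul_nonneg (Real.rpow_nonneg hx.1.le _) (hI_pos x hx.1).le
        · refine HasSubset.Subset.eventuallyLE ?_
          intro x hx
          exact ⟨lt_of_lt_of_le hε hx.1.le, by linarith [hx.2]⟩
      exact mul_le_mul_of_nonneg_left hle2 (by positivity)
    -- pointwise bound on ‖g‖
    have hnorm_le : ∀ x ∈ Set.Ioc ε y, ‖g x‖ ≤ A x + |utld y| * x ^ (-n₂ - 1) := by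
      intro x hx
      have hx0 : 0 < x := lt_of_lt_of_le hε hx.1.le
      have hp : (0:ℝ) ≤ x ^ (-n₂ - 1) := Real.rpow_nonneg hx0.le _
      have hmono : utld y ≤ utld x := hanti x y hx0 hx.2
      rw [hg_def]
      simp only [Real.norm_eq_abs, abs_mul, abs_of_nonneg hp]
      have hAx : A x = x ^ (-n₂ - 1) * (utld x - utld y) := rfl
      have habs : |utld x| ≤ (utld x - utld y) + |utld y| := by
        rcases abs_cases (utld x) with ⟨h1, _⟩ | ⟨h1, _⟩ <;>
          rcases abs_cases (utld y) with ⟨h2, _⟩ | ⟨h2, _⟩ <;> nlinarith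
      nlinarith [mul_le_mul_of_nonneg_left habs hp, hAx]
    -- assemble
    have hgnorm_int : IntegrableOn (fun x => ‖g x‖) (Set.Ioc ε y) volume := (hfi i).norm
    have hrhs_int : IntegrableOn (fun x => A x + |utld y| * x ^ (-n₂ - 1))
        (Set.Ioc ε y) volume := by
      have hsub2 : Set.Icc ε y ⊆ Set.Ioi 0 := fun x hx => lt_of_lt_of_le hε hx.1
      refine (ContinuousOn.integrableOn_Icc ?_).mono_set Set.Ioc_subset_Icc_self
      exact ((((hpow_cont (-n₂ - 1)).mono hsub2).mul
        ((hucont.mono hsub2).sub continuousOn_const)).add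
        (continuousOn_const.mul ((hpow_cont (-n₂ - 1)).mono hsub2)))
    have step1 : (∫ x in Set.Ioc ε y, ‖g x‖) ≤
        ∫ x in Set.Ioc ε y, (A x + |utld y| * x ^ (-n₂ - 1)) :=
      setIntegral_mono_on hgnorm_int hrhs_int measurableSet_Ioc hnorm_le
    have hAint' : IntegrableOn A (Set.Ioc ε y) volume := by
      rwa [← intervalIntegrable_iff_integrableOn_Ioc_of_le hεy]
    have hpint' : IntegrableOn (fun x : ℝ => |utld y| * x ^ (-n₂ - 1)) (Set.Ioc ε y) volume := by
      refine Integrable.const_mul ?_ _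
      exact hKr_int.mono_set (fun x hx => ⟨lt_of_lt_of_le hε hx.1.le, hx.2⟩)
    have step2 : (∫ x in Set.Ioc ε y, (A x + |utld y| * x ^ (-n₂ - 1)))
        = (∫ x in Set.Ioc ε y, A x) + ∫ x in Set.Ioc ε y, |utld y| * x ^ (-n₂ - 1) :=
      integral_add hAint' hpint'
    have step3 : (∫ x in Set.Ioc ε y, A x) ≤ (-n₂)⁻¹ * KI := by
      rw [← intervalIntegral.integral_of_le hεy]
      exact le_trans hAB hBle
    have step4 : (∫ x in Set.Ioc ε y, |utld y| * x ^ (-n₂ - 1)) ≤ |utld y| * Kr := by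
      rw [integral_const_mul, hKr_def]
      refine mul_le_mul_of_nonneg_left ?_ (abs_nonneg _)
      refine setIntegral_mono_set hKr_int ?_ ?_
      · refine (ae_restrict_iff' measurableSet_Ioc).2 (Filter.Eventually.of_forall ?_)
        intro x hx
        exact Real.rpow_nonneg hx.1.le _
      · exact HasSubset.Subset.eventuallyLE (fun x hx => ⟨lt_of_lt_of_le hε hx.1.le, hx.2⟩)
    rw [hbigK_def]
    calc (∫ x in Set.Ioc ε y, ‖g x‖)
        ≤ (∫ x in Set.Ioc ε y, A x) + ∫ x in Set.Ioc ε y, |utld y| * x ^ (-n₂ - 1) := by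
          rw [← step2]; exact step1
      _ ≤ (-n₂)⁻¹ * KI + |utld y| * Kr := add_le_add step3 step4
  have := integrableOn_Ioc_of_intervalIntegral_norm_bounded_left hfi hc_tend
    (Filter.Eventually.of_forall hbound)
  exact this.mono_set Set.Ioo_subset_Ioc_self

end int0

section tail
variable {u u' I utld : ℝ → ℝ} {n₁ : ℝ}
variable (hn₁1 : 1 < n₁)
variable (hu_conc : StrictConcaveOn ℝ (Set.Ici 0) u)
variable (hu_deriv : ∀ c : ℝ, 0 < c → HasDerivAt u (u' c) c)
variable (hI_pos : ∀ y : ℝ, 0 < y → 0 < I y)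
variable (hI_left : ∀ y : ℝ, 0 < y → u' (I y) = y)
variable (hI_anti : StrictAntiOn I (Set.Ioi 0))
variable (hI_cont : ContinuousOn I (Set.Ioi 0))
variable (hutld : ∀ y : ℝ, 0 < y → utld y = u (I y) - y * I y)

include hn₁1 hI_pos hI_anti hI_cont in
lemma my_tail_I (y : ℝ) (hy : 0 < y) :
    IntegrableOn (fun t => t ^ (-n₁) * I (y * t)) (Set.Ioi (1:ℝ)) volume := by
  have hbint : Integrable (fun t : ℝ => I y * t ^ (-n₁)) (volume.restrict (Set.Ioi (1:ℝ))) :=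
    (integrableOn_Ioi_rpow_of_lt (by linarith) one_pos).const_mul _
  refine hbint.mono' ?_ ?_
  · refine ContinuousOn.aestronglyMeasurable ?_ measurableSet_Ioi
    refine ContinuousOn.mul ?_ ?_
    · exact fun x hx => (Real.continuousAt_rpow_const x (-n₁)
        (Or.inl (lt_trans one_pos hx).ne')).continuousWithinAt
    · refine (hI_cont.comp (continuousOn_const.mul continuousOn_id) ?_)
      intro t ht
      exact mul_pos hy (lt_trans one_pos ht)
  · refine (ae_restrict_iff' measurableSet_Ioi).2 (Filter.Eventually.of_forall ?_)
    intro t ht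
    have ht0 : (0:ℝ) < t := lt_trans one_pos ht
    have hyt : 0 < y * t := mul_pos hy ht0
    have hIle : I (y * t) ≤ I y :=
      (hI_anti (Set.mem_Ioi.2 hy) (Set.mem_Ioi.2 hyt) ((lt_mul_iff_one_lt_right hy).2 ht)).le
    rw [Real.norm_eq_abs, abs_mul, abs_of_nonneg (Real.rpow_nonneg ht0.le _),
      abs_of_nonneg (hI_pos _ hyt).le, mul_comm (I y)]
    exact mul_le_mul_of_nonneg_left hIle (Real.rpow_nonneg ht0.le _)

include hn₁1 hu_conc hu_deriv hI_pos hI_left hI_anti hI_cont hutld in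
lemma my_tail_utld (y : ℝ) (hy : 0 < y) :
    IntegrableOn (fun t => t ^ (-n₁ - 1) * utld (y * t)) (Set.Ioi (1:ℝ)) volume := by
  have hud := my_utld_deriv hu_conc hu_deriv hI_pos hI_left hI_anti hI_cont hutld
  have hucont : ContinuousOn utld (Set.Ioi 0) := fun x hx =>
    (hud x hx).continuousAt.continuousWithinAt
  have hanti := my_utld_anti hu_conc hu_deriv hI_pos hI_left hI_anti hutld
  have hlow := my_utld_lower hu_conc hu_deriv hI_pos hI_left hI_anti hutld
  have hbint : Integrable (fun t : ℝ => |utld y| * t ^ (-n₁ - 1) + (I y * y) * t ^ (-n₁))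
      (volume.restrict (Set.Ioi (1:ℝ))) :=
    ((integrableOn_Ioi_rpow_of_lt (by linarith) one_pos).const_mul _).add
      ((integrableOn_Ioi_rpow_of_lt (by linarith) one_pos).const_mul _)
  refine hbint.mono' ?_ ?_
  · refine ContinuousOn.aestronglyMeasurable ?_ measurableSet_Ioi
    refine ContinuousOn.mul ?_ ?_
    · exact fun x hx => (Real.continuousAt_rpow_const x (-n₁ - 1)
        (Or.inl (lt_trans one_pos hx).ne')).continuousWithinAt
    · refine (hucont.comp (continuousOn_const.mul continuousOn_id) ?_)
      intro t ht
      exact mul_pos hy (lt_trans one_pos ht)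
  · refine (ae_restrict_iff' measurableSet_Ioi).2 (Filter.Eventually.of_forall ?_)
    intro t ht
    have ht0 : (0:ℝ) < t := lt_trans one_pos ht
    have hyt : 0 < y * t := mul_pos hy ht0
    have hyyt : y ≤ y * t := le_mul_of_one_le_right hy.le (le_of_lt ht)
    have hup : utld (y * t) ≤ utld y := hanti y (y * t) hy hyyt
    have hdown : utld y - I y * (y * t - y) ≤ utld (y * t) := hlow y (y * t) hy hyt
    have hIy : 0 < I y := hI_pos y hy
    have habs : |utld (y * t)| ≤ |utld y| + (I y * y) * t := by
      rcases abs_cases (utld (y * t)) with ⟨h1, _⟩ | ⟨h1, _⟩ <;>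
        rcases abs_cases (utld y) with ⟨h2, _⟩ | ⟨h2, _⟩ <;>
          nlinarith [mul_pos hIy hy, mul_nonneg (mul_nonneg hIy.le hy.le) ht0.le]
    have hpowmul : t ^ (-n₁ - 1) * t = t ^ (-n₁) := by
      rw [← Real.rpow_add_one ht0.ne']
      ring_nf
    rw [Real.norm_eq_abs, abs_mul, abs_of_nonneg (Real.rpow_nonneg ht0.le _)]
    calc t ^ (-n₁ - 1) * |utld (y * t)|
        ≤ t ^ (-n₁ - 1) * (|utld y| + (I y * y) * t) :=
          mul_le_mul_of_nonneg_left habs (Real.rpow_nonneg ht0.le _)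
      _ = |utld y| * t ^ (-n₁ - 1) + (I y * y) * (t ^ (-n₁ - 1) * t) := by ring
      _ = |utld y| * t ^ (-n₁ - 1) + (I y * y) * t ^ (-n₁) := by rw [hpowmul]

end tail


open MeasureTheory

/-- X_R is strictly decreasing on (0,∞); equivalently J_R is strictly convex on (0,∞). -/
theorem stmt_11
    (δ r θ n₁ n₂ : ℝ)
    (hδ : 0 < δ) (hr : 0 < r) (hθ : θ ≠ 0)
    (hn₂0 : n₂ < 0) (hn₁1 : 1 < n₁)
    (hroot₁ : θ ^ 2 / 2 * n₁ ^ 2 + (δ - r - θ ^ 2 / 2) * n₁ - δ = 0)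
    (hroot₂ : θ ^ 2 / 2 * n₂ ^ 2 + (δ - r - θ ^ 2 / 2) * n₂ - δ = 0)
    (u u' I utld : ℝ → ℝ)
    (hu_mono : StrictMonoOn u (Set.Ici 0))
    (hu_conc : StrictConcaveOn ℝ (Set.Ici 0) u)
    (hu_cont : ContinuousOn u (Set.Ici 0))
    (hu_deriv : ∀ c : ℝ, 0 < c → HasDerivAt u (u' c) c)
    (hu'_cont : ContinuousOn u' (Set.Ioi 0))
    (hu'_top : Filter.Tendsto u' Filter.atTop (nhds 0))
    (hu'_zero : Filter.Tendsto u' (nhdsWithin 0 (Set.Ioi 0)) Filter.atTop)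
    (hI_pos : ∀ y : ℝ, 0 < y → 0 < I y)
    (hI_left : ∀ y : ℝ, 0 < y → u' (I y) = y)
    (hI_right : ∀ c : ℝ, 0 < c → I (u' c) = c)
    (hI_anti : StrictAntiOn I (Set.Ioi 0))
    (hI_cont : ContinuousOn I (Set.Ioi 0))
    (hI_zero : Filter.Tendsto I (nhdsWithin 0 (Set.Ioi 0)) Filter.atTop)
    (hI_top : Filter.Tendsto I Filter.atTop (nhds 0))
    (hutld : ∀ y : ℝ, 0 < y → utld y = u (I y) - y * I y)
    (hI_int : ∀ y : ℝ, 0 < y →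
      MeasureTheory.IntegrableOn (fun η => η ^ (-n₂) * I η) (Set.Ioo 0 y) MeasureTheory.volume)
    (X_R : ℝ → ℝ)
    (hXR : ∀ y : ℝ, 0 < y → X_R y = (2 / (θ ^ 2 * (n₁ - n₂))) *
      (y ^ (n₂ - 1) * (∫ η in Set.Ioo 0 y, η ^ (-n₂) * I η) +
       y ^ (n₁ - 1) * ∫ η in Set.Ioi y, η ^ (-n₁) * I η))
    (J_R : ℝ → ℝ)
    (hJR : ∀ y : ℝ, 0 < y → J_R y = (2 / (θ ^ 2 * (n₁ - n₂))) *
      (y ^ n₂ * (∫ η in Set.Ioo 0 y, η ^ (-n₂ - 1) * utld η) +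
       y ^ n₁ * ∫ η in Set.Ioi y, η ^ (-n₁ - 1) * utld η))
    :
    StrictAntiOn X_R (Set.Ioi 0) ∧ StrictConvexOn ℝ (Set.Ioi 0) J_R := by
  have hθ2 : (0:ℝ) < θ ^ 2 := lt_of_le_of_ne (sq_nonneg θ) (Ne.symm (pow_ne_zero 2 hθ))
  have hn12 : (0:ℝ) < n₁ - n₂ := by linarith
  have hC : 0 < 2 / (θ ^ 2 * (n₁ - n₂)) := div_pos two_pos (mul_pos hθ2 hn12)
  -- change of variables representations
  have hP : ∀ y : ℝ, 0 < y → y ^ (n₂ - 1) * (∫ η in Set.Ioo 0 y, η ^ (-n₂) * I η)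
      = ∫ t in Set.Ioo (0:ℝ) 1, t ^ (-n₂) * I (y * t) := by
    intro y hy
    rw [my_rep₁ I (-n₂) y hy, neg_neg]
    have h1 : y ^ (n₂ - 1) = y ^ n₂ * y⁻¹ := by
      rw [show n₂ - 1 = n₂ + (-1) by ring, Real.rpow_add hy, Real.rpow_neg_one]
    rw [h1]; ring
  have hQ : ∀ y : ℝ, 0 < y → y ^ (n₁ - 1) * (∫ η in Set.Ioi y, η ^ (-n₁) * I η)
      = ∫ t in Set.Ioi (1:ℝ), t ^ (-n₁) * I (y * t) := by
    intro y hy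
    rw [my_rep₂ I (-n₁) y hy, neg_neg]
    have h1 : y ^ (n₁ - 1) = y ^ n₁ * y⁻¹ := by
      rw [show n₁ - 1 = n₁ + (-1) by ring, Real.rpow_add hy, Real.rpow_neg_one]
    rw [h1]; ring
  have hPJ : ∀ y : ℝ, 0 < y → y ^ n₂ * (∫ η in Set.Ioo 0 y, η ^ (-n₂ - 1) * utld η)
      = ∫ t in Set.Ioo (0:ℝ) 1, t ^ (-n₂ - 1) * utld (y * t) := by
    intro y hy
    rw [my_rep₁ utld (-n₂ - 1) y hy, show -(-n₂ - 1) = n₂ + 1 by ring,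
      Real.rpow_add_one hy.ne' n₂]
    have h2 : y * y⁻¹ = 1 := mul_inv_cancel₀ hy.ne'
    set S := ∫ η in Set.Ioo 0 y, η ^ (-n₂ - 1) * utld η with hS
    linear_combination (-(y ^ n₂ * S)) * h2
  have hQJ : ∀ y : ℝ, 0 < y → y ^ n₁ * (∫ η in Set.Ioi y, η ^ (-n₁ - 1) * utld η)
      = ∫ t in Set.Ioi (1:ℝ), t ^ (-n₁ - 1) * utld (y * t) := by
    intro y hy
    rw [my_rep₂ utld (-n₁ - 1) y hy, show -(-n₁ - 1) = n₁ + 1 by ring,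
      Real.rpow_add_one hy.ne' n₁]
    have h2 : y * y⁻¹ = 1 := mul_inv_cancel₀ hy.ne'
    set S := ∫ η in Set.Ioi y, η ^ (-n₁ - 1) * utld η with hS
    linear_combination (-(y ^ n₁ * S)) * h2
  have hI_anti' : ∀ s t : ℝ, 0 < s → s < t → I t < I s := fun s t hs hst =>
    hI_anti (Set.mem_Ioi.2 hs) (Set.mem_Ioi.2 (hs.trans hst)) hst
  have hPint : ∀ y : ℝ, 0 < y →
      IntegrableOn (fun t => t ^ (-n₂) * I (y * t)) (Set.Ioo (0:ℝ) 1) volume :=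
    fun y hy => my_irep₁ I (-n₂) y hy (hI_int y hy)
  have hQint : ∀ y : ℝ, 0 < y →
      IntegrableOn (fun t => t ^ (-n₁) * I (y * t)) (Set.Ioi (1:ℝ)) volume :=
    fun y hy => my_tail_I hn₁1 hI_pos hI_anti hI_cont y hy
  have hIoo_ne : volume (Set.Ioo (0:ℝ) 1) ≠ 0 := by simp [Real.volume_Ioo]
  have hIoi_ne : volume (Set.Ioi (1:ℝ)) ≠ 0 := by simp [Real.volume_Ioi]
  constructor
  · -- X_R strictly decreasing
    intro y₁ hy₁ y₂ hy₂ h12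
    have hy₁0 : (0:ℝ) < y₁ := hy₁
    have hy₂0 : (0:ℝ) < y₂ := hy₂
    rw [hXR y₁ hy₁0, hXR y₂ hy₂0, hP y₁ hy₁0, hP y₂ hy₂0, hQ y₁ hy₁0, hQ y₂ hy₂0]
    refine mul_lt_mul_of_pos_left ?_ hC
    have key1 : (∫ t in Set.Ioo (0:ℝ) 1, t ^ (-n₂) * I (y₂ * t)) <
        ∫ t in Set.Ioo (0:ℝ) 1, t ^ (-n₂) * I (y₁ * t) := by
      refine my_intlt _ _ _ measurableSet_Ioo hIoo_ne (hPint y₂ hy₂0) (hPint y₁ hy₁0) ?_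
      intro t ht
      refine mul_lt_mul_of_pos_left ?_ (Real.rpow_pos_of_pos ht.1 _)
      exact hI_anti' (y₁ * t) (y₂ * t) (mul_pos hy₁0 ht.1) (by nlinarith [ht.1])
    have key2 : (∫ t in Set.Ioi (1:ℝ), t ^ (-n₁) * I (y₂ * t)) <
        ∫ t in Set.Ioi (1:ℝ), t ^ (-n₁) * I (y₁ * t) := by
      refine my_intlt _ _ _ measurableSet_Ioi hIoi_ne (hQint y₂ hy₂0) (hQint y₁ hy₁0) ?_
      intro t ht
      have ht0 : (0:ℝ) < t := lt_trans one_pos ht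
      refine mul_lt_mul_of_pos_left ?_ (Real.rpow_pos_of_pos ht0 _)
      exact hI_anti' (y₁ * t) (y₂ * t) (mul_pos hy₁0 ht0) (by nlinarith)
    linarith
  · -- J_R strictly convex
    have husconv := my_utld_sconv hu_conc hu_deriv hI_pos hI_left hI_anti hutld
    have hPJint : ∀ y : ℝ, 0 < y →
        IntegrableOn (fun t => t ^ (-n₂ - 1) * utld (y * t)) (Set.Ioo (0:ℝ) 1) volume :=
      fun y hy => my_irep₁ utld (-n₂ - 1) y hy
        (my_utld_int0 hn₂0 hu_conc hu_deriv hI_pos hI_left hI_anti hI_cont hutld hI_int y hy)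
    have hQJint : ∀ y : ℝ, 0 < y →
        IntegrableOn (fun t => t ^ (-n₁ - 1) * utld (y * t)) (Set.Ioi (1:ℝ)) volume :=
      fun y hy => my_tail_utld hn₁1 hu_conc hu_deriv hI_pos hI_left hI_anti hI_cont hutld y hy
    refine ⟨convex_Ioi 0, ?_⟩
    intro x hx z hz hxz a b ha hb hab
    simp only [smul_eq_mul]
    have hx0 : (0:ℝ) < x := hx
    have hz0 : (0:ℝ) < z := hz
    have hm0 : (0:ℝ) < a * x + b * z := by positivity
    rw [hJR x hx0, hJR z hz0, hJR _ hm0, hPJ x hx0, hPJ z hz0, hPJ _ hm0,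
      hQJ x hx0, hQJ z hz0, hQJ _ hm0]
    have key1 : (∫ t in Set.Ioo (0:ℝ) 1, t ^ (-n₂ - 1) * utld ((a * x + b * z) * t)) <
        a * (∫ t in Set.Ioo (0:ℝ) 1, t ^ (-n₂ - 1) * utld (x * t)) +
        b * (∫ t in Set.Ioo (0:ℝ) 1, t ^ (-n₂ - 1) * utld (z * t)) := by
      have hax := (hPJint x hx0).const_mul a
      have hbz := (hPJint z hz0).const_mul b
      have hsplit : (∫ t in Set.Ioo (0:ℝ) 1,
          (a * (t ^ (-n₂ - 1) * utld (x * t)) + b * (t ^ (-n₂ - 1) * utld (z * t)))) =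
          a * (∫ t in Set.Ioo (0:ℝ) 1, t ^ (-n₂ - 1) * utld (x * t)) +
          b * (∫ t in Set.Ioo (0:ℝ) 1, t ^ (-n₂ - 1) * utld (z * t)) := by
        rw [integral_add hax hbz, integral_const_mul, integral_const_mul]
      rw [← hsplit]
      refine my_intlt _ _ _ measurableSet_Ioo hIoo_ne (hPJint _ hm0) (hax.add hbz) ?_
      intro t ht
      have ht0 : (0:ℝ) < t := ht.1
      have hxt : 0 < x * t := mul_pos hx0 ht0
      have hzt : 0 < z * t := mul_pos hz0 ht0
      have hne : x * t ≠ z * t := fun h => hxz (mul_right_cancel₀ ht0.ne' h)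
      have hconv := husconv.2 (Set.mem_Ioi.2 hxt) (Set.mem_Ioi.2 hzt) hne ha hb hab
      simp only [smul_eq_mul] at hconv
      rw [show a * (x * t) + b * (z * t) = (a * x + b * z) * t by ring] at hconv
      calc t ^ (-n₂ - 1) * utld ((a * x + b * z) * t)
          < t ^ (-n₂ - 1) * (a * utld (x * t) + b * utld (z * t)) :=
            mul_lt_mul_of_pos_left hconv (Real.rpow_pos_of_pos ht0 _)
        _ = a * (t ^ (-n₂ - 1) * utld (x * t)) + b * (t ^ (-n₂ - 1) * utld (z * t)) := by ring
    have key2 : (∫ t in Set.Ioi (1:ℝ), t ^ (-n₁ - 1) * utld ((a * x + b * z) * t)) <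
        a * (∫ t in Set.Ioi (1:ℝ), t ^ (-n₁ - 1) * utld (x * t)) +
        b * (∫ t in Set.Ioi (1:ℝ), t ^ (-n₁ - 1) * utld (z * t)) := by
      have hax := (hQJint x hx0).const_mul a
      have hbz := (hQJint z hz0).const_mul b
      have hsplit : (∫ t in Set.Ioi (1:ℝ),
          (a * (t ^ (-n₁ - 1) * utld (x * t)) + b * (t ^ (-n₁ - 1) * utld (z * t)))) =
          a * (∫ t in Set.Ioi (1:ℝ), t ^ (-n₁ - 1) * utld (x * t)) +
          b * (∫ t in Set.Ioi (1:ℝ), t ^ (-n₁ - 1) * utld (z * t)) := by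
        rw [integral_add hax hbz, integral_const_mul, integral_const_mul]
      rw [← hsplit]
      refine my_intlt _ _ _ measurableSet_Ioi hIoi_ne (hQJint _ hm0) (hax.add hbz) ?_
      intro t ht
      have ht0 : (0:ℝ) < t := lt_trans one_pos ht
      have hxt : 0 < x * t := mul_pos hx0 ht0
      have hzt : 0 < z * t := mul_pos hz0 ht0
      have hne : x * t ≠ z * t := fun h => hxz (mul_right_cancel₀ ht0.ne' h)
      have hconv := husconv.2 (Set.mem_Ioi.2 hxt) (Set.mem_Ioi.2 hzt) hne ha hb hab
      simp only [smul_eq_mul] at hconv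
      rw [show a * (x * t) + b * (z * t) = (a * x + b * z) * t by ring] at hconv
      calc t ^ (-n₁ - 1) * utld ((a * x + b * z) * t)
          < t ^ (-n₁ - 1) * (a * utld (x * t) + b * utld (z * t)) :=
            mul_lt_mul_of_pos_left hconv (Real.rpow_pos_of_pos ht0 _)
        _ = a * (t ^ (-n₁ - 1) * utld (x * t)) + b * (t ^ (-n₁ - 1) * utld (z * t)) := by ring
    calc (2 / (θ ^ 2 * (n₁ - n₂))) *
        ((∫ t in Set.Ioo (0:ℝ) 1, t ^ (-n₂ - 1) * utld ((a * x + b * z) * t)) +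
         (∫ t in Set.Ioi (1:ℝ), t ^ (-n₁ - 1) * utld ((a * x + b * z) * t)))
        < (2 / (θ ^ 2 * (n₁ - n₂))) *
          ((a * (∫ t in Set.Ioo (0:ℝ) 1, t ^ (-n₂ - 1) * utld (x * t)) +
            b * (∫ t in Set.Ioo (0:ℝ) 1, t ^ (-n₂ - 1) * utld (z * t))) +
           (a * (∫ t in Set.Ioi (1:ℝ), t ^ (-n₁ - 1) * utld (x * t)) +
            b * (∫ t in Set.Ioi (1:ℝ), t ^ (-n₁ - 1) * utld (z * t)))) :=
          mul_lt_mul_of_pos_left (by linarith) hC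
      _ = a * ((2 / (θ ^ 2 * (n₁ - n₂))) *
            ((∫ t in Set.Ioo (0:ℝ) 1, t ^ (-n₂ - 1) * utld (x * t)) +
             ∫ t in Set.Ioi (1:ℝ), t ^ (-n₁ - 1) * utld (x * t))) +
          b * ((2 / (θ ^ 2 * (n₁ - n₂))) *
            ((∫ t in Set.Ioo (0:ℝ) 1, t ^ (-n₂ - 1) * utld (z * t)) +
             ∫ t in Set.Ioi (1:ℝ), t ^ (-n₁ - 1) * utld (z * t))) := by ring
end

section
/- The function X_R satisfies lim_{y→0+} X_R(y) = ∞ and lim_{y→∞} X_R(y) = 0. -/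
open MeasureTheory Set Filter

section Aux

variable {I : ℝ → ℝ}

lemma aux_cont (hI_cont : ContinuousOn I (Set.Ioi 0)) (p : ℝ) :
    ContinuousOn (fun η : ℝ => η ^ p * I η) (Set.Ioi 0) :=
  (continuousOn_id.rpow_const (fun x hx => Or.inl (ne_of_gt hx))).mul hI_cont

lemma aux_int_Ioo (hI_cont : ContinuousOn I (Set.Ioi 0)) (p : ℝ) {a : ℝ} (b : ℝ) (ha : 0 < a) :
    IntegrableOn (fun η : ℝ => η ^ p * I η) (Set.Ioo a b) volume := by
  have hsub : Set.Icc a b ⊆ Set.Ioi 0 := fun x hx => lt_of_lt_of_le ha hx.1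
  exact (((aux_cont hI_cont p).mono hsub).integrableOn_compact isCompact_Icc).mono_set
    Set.Ioo_subset_Icc_self

lemma aux_int_Ico (hI_cont : ContinuousOn I (Set.Ioi 0)) (p : ℝ) {a : ℝ} (b : ℝ) (ha : 0 < a) :
    IntegrableOn (fun η : ℝ => η ^ p * I η) (Set.Ico a b) volume := by
  have hsub : Set.Icc a b ⊆ Set.Ioi 0 := fun x hx => lt_of_lt_of_le ha hx.1
  exact (((aux_cont hI_cont p).mono hsub).integrableOn_compact isCompact_Icc).mono_set
    Set.Ico_subset_Icc_self

lemma aux_rpow_integral {p : ℝ} (hp : -1 < p) {b : ℝ} (hb : 0 ≤ b) :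
    ∫ η in Set.Ioo 0 b, η ^ p = b ^ (p + 1) / (p + 1) := by
  rw [← integral_Ioc_eq_integral_Ioo, ← intervalIntegral.integral_of_le hb,
    integral_rpow (Or.inl hp), Real.zero_rpow (by linarith : p + 1 ≠ 0)]
  ring

lemma aux_rpow_intOn {p : ℝ} (hp : -1 < p) {b : ℝ} (hb : 0 < b) :
    IntegrableOn (fun η : ℝ => η ^ p) (Set.Ioo 0 b) volume :=
  (intervalIntegral.integrableOn_Ioo_rpow_iff hb).2 hp

/-- Upper bound for the integral over `Ioo a b`. -/
lemma aux_Ioo_le (hI_pos : ∀ y : ℝ, 0 < y → 0 < I y) (hI_anti : StrictAntiOn I (Set.Ioi 0))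
    (hI_cont : ContinuousOn I (Set.Ioi 0)) {p : ℝ} (hp : 0 < p) {a b : ℝ} (ha : 0 < a)
    (hab : a ≤ b) :
    ∫ η in Set.Ioo a b, η ^ p * I η ≤ I a * (b ^ (p + 1) / (p + 1)) := by
  have hp' : (-1 : ℝ) < p := by linarith
  have hb : 0 < b := lt_of_lt_of_le ha hab
  have h1 : ∫ η in Set.Ioo a b, η ^ p * I η ≤ ∫ η in Set.Ioo a b, η ^ p * I a := by
    refine setIntegral_mono_on (aux_int_Ioo hI_cont p b ha)
      (((aux_rpow_intOn hp' hb).mono_set (Set.Ioo_subset_Ioo ha.le le_rfl)).mul_const (I a))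
      measurableSet_Ioo ?_
    intro x hx
    have hx0 : 0 < x := ha.trans hx.1
    exact mul_le_mul_of_nonneg_left (hI_anti ha hx0 hx.1).le (Real.rpow_nonneg hx0.le p)
  have h2 : ∫ η in Set.Ioo a b, η ^ p * I a = (∫ η in Set.Ioo a b, η ^ p) * I a :=
    integral_mul_const (I a) _
  have h3 : (∫ η in Set.Ioo a b, η ^ p) ≤ ∫ η in Set.Ioo 0 b, η ^ p := by
    refine setIntegral_mono_set (aux_rpow_intOn hp' hb) ?_
      (HasSubset.Subset.eventuallyLE (Set.Ioo_subset_Ioo ha.le le_rfl))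
    filter_upwards [ae_restrict_mem measurableSet_Ioo] with x hx
    exact Real.rpow_nonneg hx.1.le p
  have h4 : ∫ η in Set.Ioo 0 b, η ^ p = b ^ (p + 1) / (p + 1) := aux_rpow_integral hp' hb.le
  have hIa : 0 ≤ I a := (hI_pos a ha).le
  calc ∫ η in Set.Ioo a b, η ^ p * I η ≤ (∫ η in Set.Ioo a b, η ^ p) * I a := h1.trans_eq h2
    _ ≤ (b ^ (p + 1) / (p + 1)) * I a := by
        refine mul_le_mul_of_nonneg_right ?_ hIa
        rw [← h4]; exact h3
    _ = I a * (b ^ (p + 1) / (p + 1)) := mul_comm _ _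

lemma aux_int_Ioi (hI_pos : ∀ y : ℝ, 0 < y → 0 < I y) (hI_anti : StrictAntiOn I (Set.Ioi 0))
    (hI_cont : ContinuousOn I (Set.Ioi 0)) {q : ℝ} (hq : q < -1) {y : ℝ} (hy : 0 < y) :
    IntegrableOn (fun η : ℝ => η ^ q * I η) (Set.Ioi y) volume := by
  have hb : IntegrableOn (fun η : ℝ => I y * η ^ q) (Set.Ioi y) volume :=
    (integrableOn_Ioi_rpow_of_lt hq hy).const_mul (I y)
  refine hb.mono' (((aux_cont hI_cont q).mono fun x hx => hy.trans hx).aestronglyMeasurable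
    measurableSet_Ioi) ?_
  rw [ae_restrict_iff' measurableSet_Ioi]
  filter_upwards with x hx
  have hx0 : 0 < x := hy.trans hx
  rw [Real.norm_eq_abs, abs_of_nonneg (mul_nonneg (Real.rpow_nonneg hx0.le q) (hI_pos x hx0).le),
    mul_comm (I y)]
  exact mul_le_mul_of_nonneg_left (hI_anti (Set.mem_Ioi.2 hy) (Set.mem_Ioi.2 hx0) hx).le
    (Real.rpow_nonneg hx0.le q)

lemma aux_Ioi_le (hI_pos : ∀ y : ℝ, 0 < y → 0 < I y) (hI_anti : StrictAntiOn I (Set.Ioi 0))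
    (hI_cont : ContinuousOn I (Set.Ioi 0)) {q : ℝ} (hq : q < -1) {y : ℝ} (hy : 0 < y) :
    ∫ η in Set.Ioi y, η ^ q * I η ≤ I y * (-y ^ (q + 1) / (q + 1)) := by
  have hb : IntegrableOn (fun η : ℝ => I y * η ^ q) (Set.Ioi y) volume :=
    (integrableOn_Ioi_rpow_of_lt hq hy).const_mul (I y)
  have h1 : ∫ η in Set.Ioi y, η ^ q * I η ≤ ∫ η in Set.Ioi y, I y * η ^ q := by
    refine setIntegral_mono_on (aux_int_Ioi hI_pos hI_anti hI_cont hq hy) hb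
      measurableSet_Ioi ?_
    intro x hx
    have hx0 : 0 < x := hy.trans hx
    rw [mul_comm (I y)]
    exact mul_le_mul_of_nonneg_left (hI_anti (Set.mem_Ioi.2 hy) (Set.mem_Ioi.2 hx0) hx).le
      (Real.rpow_nonneg hx0.le q)
  rw [integral_const_mul, integral_Ioi_rpow_of_lt hq hy] at h1
  exact h1

/-- Lower bound for the integral over `Ioi y` near zero. -/
lemma aux_Ioi_ge (hI_pos : ∀ y : ℝ, 0 < y → 0 < I y) (hI_anti : StrictAntiOn I (Set.Ioi 0))
    (hI_cont : ContinuousOn I (Set.Ioi 0)) {q : ℝ} (hq : q < -1) {y : ℝ} (hy : 0 < y) :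
    y * ((2 * y) ^ q * I (2 * y)) ≤ ∫ η in Set.Ioi y, η ^ q * I η := by
  have h2y : 0 < 2 * y := by linarith
  have hsub : Set.Ioo y (2 * y) ⊆ Set.Ioi y := Set.Ioo_subset_Ioi_self
  have hnn : 0 ≤ᵐ[volume.restrict (Set.Ioi y)] fun η : ℝ => η ^ q * I η := by
    rw [Filter.EventuallyLE, ae_restrict_iff' measurableSet_Ioi]
    filter_upwards with x hx
    simpa using mul_nonneg (Real.rpow_nonneg (hy.trans hx).le q) (hI_pos x (hy.trans hx)).le
  have h1 : ∫ η in Set.Ioo y (2 * y), (2 * y) ^ q * I (2 * y) ≤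
      ∫ η in Set.Ioo y (2 * y), η ^ q * I η := by
    refine setIntegral_mono_on (integrableOn_const measure_Ioo_lt_top.ne)
      (aux_int_Ioo hI_cont q (2 * y) hy) measurableSet_Ioo ?_
    intro x hx
    have hx0 : 0 < x := hy.trans hx.1
    refine mul_le_mul (Real.rpow_le_rpow_of_nonpos hx0 hx.2.le (by linarith))
      (hI_anti (Set.mem_Ioi.2 hx0) (Set.mem_Ioi.2 h2y) hx.2).le (hI_pos _ h2y).le
      (Real.rpow_nonneg hx0.le q)
  have h2 : ∫ η in Set.Ioo y (2 * y), (2 * y) ^ q * I (2 * y) =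
      y * ((2 * y) ^ q * I (2 * y)) := by
    rw [setIntegral_const, measureReal_def, Real.volume_Ioo, smul_eq_mul]
    rw [ENNReal.toReal_ofReal (by linarith)]
    ring
  have h3 : ∫ η in Set.Ioo y (2 * y), η ^ q * I η ≤ ∫ η in Set.Ioi y, η ^ q * I η :=
    setIntegral_mono_set (aux_int_Ioi hI_pos hI_anti hI_cont hq hy) hnn
      (HasSubset.Subset.eventuallyLE hsub)
  linarith [h1, h2, h3]

/-- Splitting the integral over `Ioo 0 y` at an interior point. -/
lemma aux_split (f : ℝ → ℝ) {a y : ℝ} (ha : 0 < a) (hay : a ≤ y)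
    (h1 : IntegrableOn f (Set.Ioo 0 a) volume) (h2 : IntegrableOn f (Set.Ico a y) volume) :
    ∫ η in Set.Ioo 0 y, f η = (∫ η in Set.Ioo 0 a, f η) + ∫ η in Set.Ioo a y, f η := by
  have hdisj : Disjoint (Set.Ioo 0 a) (Set.Ico a y) := by
    rw [Set.disjoint_left]
    rintro x ⟨_, hxa⟩ ⟨hax, _⟩
    exact absurd hax (not_le.2 hxa)
  rw [← Set.Ioo_union_Ico_eq_Ioo ha hay, setIntegral_union hdisj measurableSet_Ico h1 h2,
    integral_Ico_eq_integral_Ioo]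

end Aux
/-- lim_{y→0+} X_R(y) = ∞ and lim_{y→∞} X_R(y) = 0. -/
theorem stmt_12
    (δ r θ n₁ n₂ : ℝ)
    (hδ : 0 < δ) (hr : 0 < r) (hθ : θ ≠ 0)
    (hn₂0 : n₂ < 0) (hn₁1 : 1 < n₁)
    (hroot₁ : θ ^ 2 / 2 * n₁ ^ 2 + (δ - r - θ ^ 2 / 2) * n₁ - δ = 0)
    (hroot₂ : θ ^ 2 / 2 * n₂ ^ 2 + (δ - r - θ ^ 2 / 2) * n₂ - δ = 0)
    (u u' I utld : ℝ → ℝ)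
    (hu_mono : StrictMonoOn u (Set.Ici 0))
    (hu_conc : StrictConcaveOn ℝ (Set.Ici 0) u)
    (hu_cont : ContinuousOn u (Set.Ici 0))
    (hu_deriv : ∀ c : ℝ, 0 < c → HasDerivAt u (u' c) c)
    (hu'_cont : ContinuousOn u' (Set.Ioi 0))
    (hu'_top : Filter.Tendsto u' Filter.atTop (nhds 0))
    (hu'_zero : Filter.Tendsto u' (nhdsWithin 0 (Set.Ioi 0)) Filter.atTop)
    (hI_pos : ∀ y : ℝ, 0 < y → 0 < I y)
    (hI_left : ∀ y : ℝ, 0 < y → u' (I y) = y)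
    (hI_right : ∀ c : ℝ, 0 < c → I (u' c) = c)
    (hI_anti : StrictAntiOn I (Set.Ioi 0))
    (hI_cont : ContinuousOn I (Set.Ioi 0))
    (hI_zero : Filter.Tendsto I (nhdsWithin 0 (Set.Ioi 0)) Filter.atTop)
    (hI_top : Filter.Tendsto I Filter.atTop (nhds 0))
    (hutld : ∀ y : ℝ, 0 < y → utld y = u (I y) - y * I y)
    (hI_int : ∀ y : ℝ, 0 < y →
      MeasureTheory.IntegrableOn (fun η => η ^ (-n₂) * I η) (Set.Ioo 0 y) MeasureTheory.volume)
    (X_R : ℝ → ℝ)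
    (hXR : ∀ y : ℝ, 0 < y → X_R y = (2 / (θ ^ 2 * (n₁ - n₂))) *
      (y ^ (n₂ - 1) * (∫ η in Set.Ioo 0 y, η ^ (-n₂) * I η) +
       y ^ (n₁ - 1) * ∫ η in Set.Ioi y, η ^ (-n₁) * I η))
    :
    Filter.Tendsto X_R (nhdsWithin 0 (Set.Ioi 0)) Filter.atTop ∧
    Filter.Tendsto X_R Filter.atTop (nhds 0) := by
  have hθ2 : (0:ℝ) < θ ^ 2 := (sq_nonneg θ).lt_of_ne (Ne.symm (pow_ne_zero 2 hθ))
  have hn12 : (0:ℝ) < n₁ - n₂ := by linarith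
  set C : ℝ := 2 / (θ ^ 2 * (n₁ - n₂)) with hCdef
  have hC : 0 < C := div_pos two_pos (mul_pos hθ2 hn12)
  have hq1 : -n₁ < -1 := by linarith
  have hp2 : (0:ℝ) < -n₂ := by linarith
  -- nonnegativity of the two terms
  have hT1nn : ∀ y : ℝ, 0 < y → 0 ≤ ∫ η in Set.Ioo 0 y, η ^ (-n₂) * I η := by
    intro y hy
    refine setIntegral_nonneg measurableSet_Ioo fun x hx => ?_
    exact mul_nonneg (Real.rpow_nonneg hx.1.le _) (hI_pos x hx.1).le
  have hT2nn : ∀ y : ℝ, 0 < y → 0 ≤ ∫ η in Set.Ioi y, η ^ (-n₁) * I η := by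
    intro y hy
    refine setIntegral_nonneg measurableSet_Ioi fun x hx => ?_
    exact mul_nonneg (Real.rpow_nonneg (hy.trans hx).le _) (hI_pos x (hy.trans hx)).le
  constructor
  · -- limit at 0+
    have key : ∀ y ∈ Set.Ioi (0:ℝ), C * 2 ^ (-n₁) * I (2 * y) ≤ X_R y := by
      intro y hy
      rw [Set.mem_Ioi] at hy
      rw [hXR y hy]
      have hT1 : 0 ≤ y ^ (n₂ - 1) * ∫ η in Set.Ioo 0 y, η ^ (-n₂) * I η :=
        mul_nonneg (Real.rpow_nonneg hy.le _) (hT1nn y hy)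
      have h0 := aux_Ioi_ge hI_pos hI_anti hI_cont hq1 hy
      have hyy : y ^ (n₁ - 1) * y ^ (-n₁) * y = 1 := by
        have h' : y ^ (n₁ - 1) * y ^ (-n₁) = y ^ (-1 : ℝ) := by
          rw [← Real.rpow_add hy]; ring_nf
        rw [h', Real.rpow_neg_one]
        exact inv_mul_cancel₀ hy.ne'
      have e1 : y ^ (n₁ - 1) * (y * ((2 * y) ^ (-n₁) * I (2 * y))) = 2 ^ (-n₁) * I (2 * y) := by
        rw [Real.mul_rpow (by norm_num : (0:ℝ) ≤ 2) hy.le]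
        linear_combination (2 ^ (-n₁) * I (2 * y)) * hyy
      have hT2 : 2 ^ (-n₁) * I (2 * y) ≤ y ^ (n₁ - 1) * ∫ η in Set.Ioi y, η ^ (-n₁) * I η := by
        rw [← e1]
        exact mul_le_mul_of_nonneg_left h0 (Real.rpow_nonneg hy.le _)
      calc C * 2 ^ (-n₁) * I (2 * y) = C * (0 + 2 ^ (-n₁) * I (2 * y)) := by ring
        _ ≤ C * (y ^ (n₂ - 1) * (∫ η in Set.Ioo 0 y, η ^ (-n₂) * I η) +
              y ^ (n₁ - 1) * ∫ η in Set.Ioi y, η ^ (-n₁) * I η) :=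
            mul_le_mul_of_nonneg_left (add_le_add hT1 hT2) hC.le
    have h2 : Filter.Tendsto (fun y : ℝ => 2 * y) (nhdsWithin 0 (Set.Ioi 0))
        (nhdsWithin 0 (Set.Ioi 0)) := by
      apply tendsto_nhdsWithin_of_tendsto_nhds_of_eventually_within
      · have h : Filter.Tendsto (fun y : ℝ => 2 * y) (nhds 0) (nhds (0:ℝ)) := by
          simpa using (continuous_mul_left (2:ℝ)).tendsto (0:ℝ)
        exact h.mono_left nhdsWithin_le_nhds
      · filter_upwards [self_mem_nhdsWithin] with y hy
        exact Set.mem_Ioi.2 (mul_pos two_pos hy)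
    have hg : Filter.Tendsto (fun y : ℝ => C * 2 ^ (-n₁) * I (2 * y))
        (nhdsWithin 0 (Set.Ioi 0)) Filter.atTop := by
      have := hI_zero.comp h2
      exact Filter.Tendsto.const_mul_atTop (by positivity : (0:ℝ) < C * 2 ^ (-n₁)) this
    refine Filter.tendsto_atTop_mono' _ ?_ hg
    filter_upwards [self_mem_nhdsWithin] with y hy using key y hy
  · -- limit at infinity
    set F1 : ℝ := ∫ η in Set.Ioo 0 1, η ^ (-n₂) * I η with hF1def
    have hp2' : (-1:ℝ) < -n₂ := by linarith
    have t1 : Filter.Tendsto (fun y : ℝ => y ^ (n₂ - 1)) Filter.atTop (nhds 0) := by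
      have := tendsto_rpow_neg_atTop (show (0:ℝ) < 1 - n₂ by linarith)
      simpa [neg_sub] using this
    have t2 : Filter.Tendsto (fun y : ℝ => y ^ ((n₂ - 1) / 2)) Filter.atTop (nhds 0) := by
      have h := tendsto_rpow_neg_atTop (show (0:ℝ) < (1 - n₂) / 2 by linarith)
      rwa [show -((1 - n₂) / 2) = (n₂ - 1) / 2 by ring] at h
    have t3 : Filter.Tendsto (fun y : ℝ => I (y ^ (2⁻¹:ℝ))) Filter.atTop (nhds 0) :=
      hI_top.comp (tendsto_rpow_atTop (by norm_num : (0:ℝ) < 2⁻¹))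
    have hG : Filter.Tendsto (fun y : ℝ => C * (F1 * y ^ (n₂ - 1) +
        I 1 / (-n₂ + 1) * y ^ ((n₂ - 1) / 2) + I (y ^ (2⁻¹:ℝ)) / (-n₂ + 1) + I y / (n₁ - 1)))
        Filter.atTop (nhds (C * (F1 * 0 + I 1 / (-n₂ + 1) * 0 + 0 / (-n₂ + 1) + 0 / (n₁ - 1)))) :=
      ((((t1.const_mul F1).add (t2.const_mul (I 1 / (-n₂ + 1)))).add
        (t3.div_const (-n₂ + 1))).add (hI_top.div_const (n₁ - 1))).const_mul C
    rw [show C * (F1 * 0 + I 1 / (-n₂ + 1) * 0 + 0 / (-n₂ + 1) + 0 / (n₁ - 1)) = 0 by ring] at hG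
    refine squeeze_zero' ?_ ?_ hG
    · -- nonnegativity
      filter_upwards [Filter.eventually_gt_atTop 0] with y hy
      rw [hXR y hy]
      exact mul_nonneg hC.le (add_nonneg
        (mul_nonneg (Real.rpow_nonneg hy.le _) (hT1nn y hy))
        (mul_nonneg (Real.rpow_nonneg hy.le _) (hT2nn y hy)))
    · -- upper bound
      filter_upwards [Filter.eventually_ge_atTop 2] with y hy2
      have hy0 : (0:ℝ) < y := by linarith
      have hy1 : (1:ℝ) ≤ y := by linarith
      set a : ℝ := y ^ (2⁻¹:ℝ) with hadef
      have ha0 : 0 < a := Real.rpow_pos_of_pos hy0 _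
      have ha1 : (1:ℝ) ≤ a := Real.one_le_rpow hy1 (by norm_num)
      have hay : a ≤ y := by
        have h := Real.rpow_le_rpow_of_exponent_le hy1 (by norm_num : (2⁻¹:ℝ) ≤ 1)
        rwa [Real.rpow_one] at h
      have hs1 : (∫ η in Set.Ioo 0 a, η ^ (-n₂) * I η) =
          F1 + ∫ η in Set.Ioo 1 a, η ^ (-n₂) * I η :=
        aux_split (fun η => η ^ (-n₂) * I η) one_pos ha1 (hI_int 1 one_pos)
          (aux_int_Ico hI_cont _ _ one_pos)
      have hs2 : (∫ η in Set.Ioo 0 y, η ^ (-n₂) * I η) =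
          (∫ η in Set.Ioo 0 a, η ^ (-n₂) * I η) + ∫ η in Set.Ioo a y, η ^ (-n₂) * I η :=
        aux_split (fun η => η ^ (-n₂) * I η) ha0 hay (hI_int a ha0)
          (aux_int_Ico hI_cont _ _ ha0)
      have hA : (∫ η in Set.Ioo 1 a, η ^ (-n₂) * I η) ≤ I 1 * (a ^ (-n₂ + 1) / (-n₂ + 1)) :=
        aux_Ioo_le hI_pos hI_anti hI_cont hp2 one_pos ha1
      have hB : (∫ η in Set.Ioo a y, η ^ (-n₂) * I η) ≤ I a * (y ^ (-n₂ + 1) / (-n₂ + 1)) :=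
        aux_Ioo_le hI_pos hI_anti hI_cont hp2 ha0 hay
      have hD : (∫ η in Set.Ioi y, η ^ (-n₁) * I η) ≤ I y * (-y ^ (-n₁ + 1) / (-n₁ + 1)) :=
        aux_Ioi_le hI_pos hI_anti hI_cont hq1 hy0
      have hne1 : (-n₁ + 1 : ℝ) ≠ 0 := by
        have h : (-n₁ + 1 : ℝ) < 0 := by linarith
        exact h.ne
      have hne2 : (n₁ - 1 : ℝ) ≠ 0 := by
        have h : (0:ℝ) < n₁ - 1 := by linarith
        exact h.ne'
      have c2 : -y ^ (-n₁ + 1) / (-n₁ + 1) = y ^ (-n₁ + 1) / (n₁ - 1) := by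
        rw [div_eq_div_iff hne1 hne2]; ring
      rw [c2] at hD
      have e2 : y ^ (n₂ - 1) * y ^ (-n₂ + 1) = 1 := by
        rw [← Real.rpow_add hy0, show n₂ - 1 + (-n₂ + 1) = (0:ℝ) by ring, Real.rpow_zero]
      have e2' : y ^ (n₁ - 1) * y ^ (-n₁ + 1) = 1 := by
        rw [← Real.rpow_add hy0, show n₁ - 1 + (-n₁ + 1) = (0:ℝ) by ring, Real.rpow_zero]
      have e3 : y ^ (n₂ - 1) * a ^ (-n₂ + 1) = y ^ ((n₂ - 1) / 2) := by
        rw [hadef, ← Real.rpow_mul hy0.le, ← Real.rpow_add hy0,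
          show n₂ - 1 + 2⁻¹ * (-n₂ + 1) = (n₂ - 1) / 2 by ring]
      have hynn : 0 ≤ y ^ (n₂ - 1) := Real.rpow_nonneg hy0.le _
      have hynn' : 0 ≤ y ^ (n₁ - 1) := Real.rpow_nonneg hy0.le _
      have b1 : y ^ (n₂ - 1) * ((F1 + ∫ η in Set.Ioo 1 a, η ^ (-n₂) * I η) +
            ∫ η in Set.Ioo a y, η ^ (-n₂) * I η) ≤
          y ^ (n₂ - 1) * (F1 + I 1 * (a ^ (-n₂ + 1) / (-n₂ + 1)) +
            I a * (y ^ (-n₂ + 1) / (-n₂ + 1))) :=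
        mul_le_mul_of_nonneg_left (add_le_add (add_le_add le_rfl hA) hB) hynn
      have b2 : y ^ (n₁ - 1) * (∫ η in Set.Ioi y, η ^ (-n₁) * I η) ≤
          y ^ (n₁ - 1) * (I y * (y ^ (-n₁ + 1) / (n₁ - 1))) :=
        mul_le_mul_of_nonneg_left hD hynn'
      have eq1 : y ^ (n₂ - 1) * (F1 + I 1 * (a ^ (-n₂ + 1) / (-n₂ + 1)) +
            I a * (y ^ (-n₂ + 1) / (-n₂ + 1))) =
          F1 * y ^ (n₂ - 1) + I 1 / (-n₂ + 1) * y ^ ((n₂ - 1) / 2) + I a / (-n₂ + 1) := by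
        linear_combination (I 1 / (-n₂ + 1)) * e3 + (I a / (-n₂ + 1)) * e2
      have eq2 : y ^ (n₁ - 1) * (I y * (y ^ (-n₁ + 1) / (n₁ - 1))) = I y / (n₁ - 1) := by
        linear_combination (I y / (n₁ - 1)) * e2'
      rw [hXR y hy0, hs2, hs1]
      refine mul_le_mul_of_nonneg_left ?_ hC.le
      calc y ^ (n₂ - 1) * ((F1 + ∫ η in Set.Ioo 1 a, η ^ (-n₂) * I η) +
            ∫ η in Set.Ioo a y, η ^ (-n₂) * I η) +
            y ^ (n₁ - 1) * ∫ η in Set.Ioi y, η ^ (-n₁) * I η ≤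
          y ^ (n₂ - 1) * (F1 + I 1 * (a ^ (-n₂ + 1) / (-n₂ + 1)) +
            I a * (y ^ (-n₂ + 1) / (-n₂ + 1))) +
            y ^ (n₁ - 1) * (I y * (y ^ (-n₁ + 1) / (n₁ - 1))) := add_le_add b1 b2
        _ = F1 * y ^ (n₂ - 1) + I 1 / (-n₂ + 1) * y ^ ((n₂ - 1) / 2) + I a / (-n₂ + 1) +
            I y / (n₁ - 1) := by linear_combination eq1 + eq2
end

section
/- The function J_R is twice continuously differentiable on (0,∞) and satisfies the ordinary differential equation (θ²/2)y²J_R″(y) + (δ−r)yJ_R′(y) − δJ_R(y) + ũ(y) = 0 for every y > 0. -/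
open MeasureTheory
open Set Filter

set_option maxHeartbeats 2000000 in
/-- J_R is twice continuously differentiable on (0,∞) and satisfies
(θ²/2)y²J_R″(y) + (δ−r)yJ_R′(y) − δJ_R(y) + ũ(y) = 0 for every y > 0. -/
theorem stmt_13
    (δ r θ n₁ n₂ : ℝ)
    (hδ : 0 < δ) (hr : 0 < r) (hθ : θ ≠ 0)
    (hn₂0 : n₂ < 0) (hn₁1 : 1 < n₁)
    (hroot₁ : θ ^ 2 / 2 * n₁ ^ 2 + (δ - r - θ ^ 2 / 2) * n₁ - δ = 0)
    (hroot₂ : θ ^ 2 / 2 * n₂ ^ 2 + (δ - r - θ ^ 2 / 2) * n₂ - δ = 0)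
    (u u' I utld : ℝ → ℝ)
    (hu_mono : StrictMonoOn u (Set.Ici 0))
    (hu_conc : StrictConcaveOn ℝ (Set.Ici 0) u)
    (hu_cont : ContinuousOn u (Set.Ici 0))
    (hu_deriv : ∀ c : ℝ, 0 < c → HasDerivAt u (u' c) c)
    (hu'_cont : ContinuousOn u' (Set.Ioi 0))
    (hu'_top : Filter.Tendsto u' Filter.atTop (nhds 0))
    (hu'_zero : Filter.Tendsto u' (nhdsWithin 0 (Set.Ioi 0)) Filter.atTop)
    (hI_pos : ∀ y : ℝ, 0 < y → 0 < I y)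
    (hI_left : ∀ y : ℝ, 0 < y → u' (I y) = y)
    (hI_right : ∀ c : ℝ, 0 < c → I (u' c) = c)
    (hI_anti : StrictAntiOn I (Set.Ioi 0))
    (hI_cont : ContinuousOn I (Set.Ioi 0))
    (hI_zero : Filter.Tendsto I (nhdsWithin 0 (Set.Ioi 0)) Filter.atTop)
    (hI_top : Filter.Tendsto I Filter.atTop (nhds 0))
    (hutld : ∀ y : ℝ, 0 < y → utld y = u (I y) - y * I y)
    (hI_int : ∀ y : ℝ, 0 < y →
      MeasureTheory.IntegrableOn (fun η => η ^ (-n₂) * I η) (Set.Ioo 0 y) MeasureTheory.volume)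
    (J_R : ℝ → ℝ)
    (hJR : ∀ y : ℝ, 0 < y → J_R y = (2 / (θ ^ 2 * (n₁ - n₂))) *
      (y ^ n₂ * (∫ η in Set.Ioo 0 y, η ^ (-n₂ - 1) * utld η) +
       y ^ n₁ * ∫ η in Set.Ioi y, η ^ (-n₁ - 1) * utld η))
    :
    ∃ J' J'' : ℝ → ℝ,
      (∀ y : ℝ, 0 < y → HasDerivAt J_R (J' y) y) ∧
      (∀ y : ℝ, 0 < y → HasDerivAt J' (J'' y) y) ∧
      ContinuousOn J' (Set.Ioi 0) ∧
      ContinuousOn J'' (Set.Ioi 0) ∧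
      ∀ y : ℝ, 0 < y →
        θ ^ 2 / 2 * y ^ 2 * J'' y + (δ - r) * y * J' y - δ * J_R y + utld y = 0 := by
  
  -- surjectivity of I onto (0,∞)
  have hI_surj : ∀ c : ℝ, 0 < c → ∃ y, 0 < y ∧ I y = c := by
    intro c hc
    obtain ⟨M, hM0, hMlt⟩ : ∃ M, 0 < M ∧ I M < c := by
      have h1 : ∀ᶠ M in atTop, I M < c := hI_top.eventually (gt_mem_nhds hc)
      exact ((h1.and (eventually_gt_atTop 0)).exists.imp fun M h => ⟨h.2, h.1⟩)
    obtain ⟨ε, hε0, hεgt⟩ : ∃ ε, 0 < ε ∧ c < I ε := by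
      have h1 : ∀ᶠ ε in nhdsWithin 0 (Set.Ioi 0), c < I ε := hI_zero.eventually (eventually_gt_atTop c)
      exact ((h1.and self_mem_nhdsWithin).exists.imp fun ε h => ⟨h.2, h.1⟩)
    have hεM : ε < M := by
      by_contra h
      push_neg at h
      rcases eq_or_lt_of_le h with h | h
      · rw [← h] at hεgt; linarith
      · have := hI_anti hM0 hε0 h; linarith
    have := intermediate_value_Icc' (le_of_lt hεM)
      (hI_cont.mono (fun x hx => lt_of_lt_of_le hε0 hx.1))
    have hc' : c ∈ Set.Icc (I M) (I ε) := ⟨le_of_lt hMlt, le_of_lt hεgt⟩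
    obtain ⟨y, hy, hyc⟩ := this hc'
    exact ⟨y, lt_of_lt_of_le hε0 hy.1, hyc⟩
  have hu'_pos : ∀ c : ℝ, 0 < c → 0 < u' c := by
    intro c hc
    obtain ⟨y, hy, rfl⟩ := hI_surj c hc
    rw [hI_left y hy]; exact hy
  have hu'_anti : AntitoneOn u' (Set.Ioi 0) := by
    intro a ha b hb hab
    by_contra h
    push_neg at h
    have := hI_anti (hu'_pos a ha) (hu'_pos b hb) h
    rw [hI_right a ha, hI_right b hb] at this
    exact absurd hab (not_le.mpr this)
  -- tangent line inequality
  have htang : ∀ x : ℝ, 0 ≤ x → ∀ c : ℝ, 0 < c → u x ≤ u c + u' c * (x - c) := by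
    intro x hx c hc
    rcases lt_trichotomy x c with h | h | h
    · obtain ⟨ξ, hξ, hslope⟩ := exists_hasDerivAt_eq_slope u u' h
        (hu_cont.mono (fun t ht => le_trans hx ht.1))
        (fun t ht => hu_deriv t (lt_of_le_of_lt hx ht.1))
      have hξ0 : 0 < ξ := lt_of_le_of_lt hx hξ.1
      have h1 : u' c ≤ u' ξ := hu'_anti hξ0 hc (le_of_lt hξ.2)
      have h2 : u' ξ * (c - x) = u c - u x :=
        (eq_div_iff (by linarith : c - x ≠ 0)).mp hslope
      nlinarith
    · subst h; simp
    · obtain ⟨ξ, hξ, hslope⟩ := exists_hasDerivAt_eq_slope u u' h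
        (hu_cont.mono (fun t ht => le_trans (le_of_lt hc) ht.1))
        (fun t ht => hu_deriv t (lt_of_lt_of_le hc (le_of_lt ht.1)))
      have h1 : u' ξ ≤ u' c := hu'_anti hc (lt_trans hc hξ.1) (le_of_lt hξ.1)
      have h2 : u' ξ * (x - c) = u x - u c :=
        (eq_div_iff (by linarith : x - c ≠ 0)).mp hslope
      nlinarith
  -- Fenchel-type inequality
  have hutld_le : ∀ a : ℝ, 0 < a → ∀ b : ℝ, 0 < b → utld a ≤ utld b + (b - a) * I a := by
    intro a ha b hb
    have h := htang (I a) (le_of_lt (hI_pos a ha)) (I b) (hI_pos b hb)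
    rw [hI_left b hb] at h
    rw [hutld a ha, hutld b hb]
    nlinarith [hI_pos a ha]
  have hutld_lb : ∀ a : ℝ, 0 < a → u 0 ≤ utld a := by
    intro a ha
    have h := htang 0 le_rfl (I a) (hI_pos a ha)
    rw [hI_left a ha, hutld a ha] at *
    nlinarith
  have hutld_anti : ∀ a : ℝ, 0 < a → ∀ b : ℝ, a ≤ b → utld b ≤ utld a := by
    intro a ha b hab
    have hb : 0 < b := lt_of_lt_of_le ha hab
    have h := hutld_le b hb a ha
    nlinarith [hI_pos b hb]
  -- squeeze: (b-a) * I b ≤ utld a - utld b ≤ (b-a) * I a for 0 < a < b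
  have hsq : ∀ a : ℝ, 0 < a → ∀ b : ℝ, 0 < b →
      (b - a) * I b ≤ utld a - utld b ∧ utld a - utld b ≤ (b - a) * I a := by
    intro a ha b hb
    constructor
    · have := hutld_le b hb a ha; linarith
    · have := hutld_le a ha b hb; linarith
  -- derivative of utld
  have hutld_deriv : ∀ y : ℝ, 0 < y → HasDerivAt utld (-(I y)) y := by
    intro y hy
    rw [hasDerivAt_iff_tendsto_slope]
    have hIy : ContinuousAt I y := hI_cont.continuousAt (Ioi_mem_nhds hy)
    have hdist : Tendsto (fun t => |I t - I y|) (nhdsWithin y {y}ᶜ) (nhds 0) := by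
      have h : Tendsto (fun t => |I t - I y|) (nhds y) (nhds |I y - I y|) :=
        ((hIy.tendsto.sub tendsto_const_nhds).abs)
      simpa using h.mono_left nhdsWithin_le_nhds
    rw [tendsto_iff_dist_tendsto_zero]
    apply squeeze_zero' (Filter.Eventually.of_forall fun t => dist_nonneg) ?_ hdist
    filter_upwards [self_mem_nhdsWithin,
      eventually_nhdsWithin_of_eventually_nhds (Ioi_mem_nhds hy)] with t htne ht0
    have htne : t ≠ y := htne
    have ht0 : (0:ℝ) < t := ht0
    rw [Real.dist_eq, slope_def_field]
    rcases lt_or_gt_of_ne htne with hlt | hgt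
    · obtain ⟨h1, h2⟩ := hsq t ht0 y hy
      have hub : (utld t - utld y) / (t - y) ≤ -(I y) := by
        rw [div_le_iff_of_neg (by linarith : t - y < 0)]; nlinarith
      have hlb : -(I t) ≤ (utld t - utld y) / (t - y) := by
        rw [le_div_iff_of_neg (by linarith : t - y < 0)]; nlinarith
      rw [abs_le]
      refine ⟨?_, ?_⟩
      · have := le_abs_self (I t - I y); have := abs_nonneg (I t - I y); linarith
      · have := neg_le_abs (I t - I y); have := abs_nonneg (I t - I y); linarith
    · obtain ⟨h1, h2⟩ := hsq y hy t ht0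
      have hlb : -(I y) ≤ (utld t - utld y) / (t - y) := by
        rw [le_div_iff₀ (by linarith : (0:ℝ) < t - y)]; nlinarith
      have hub : (utld t - utld y) / (t - y) ≤ -(I t) := by
        rw [div_le_iff₀ (by linarith : (0:ℝ) < t - y)]; nlinarith
      rw [abs_le]
      refine ⟨?_, ?_⟩
      · have := le_abs_self (I t - I y); have := abs_nonneg (I t - I y); linarith
      · have := neg_le_abs (I t - I y); have := abs_nonneg (I t - I y); linarith
  have hutld_cont : ContinuousOn utld (Set.Ioi 0) :=
    fun t ht => (hutld_deriv t ht).continuousAt.continuousWithinAt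
  have hrpow_cont : ∀ p : ℝ, ContinuousOn (fun η : ℝ => η ^ p) (Set.Ioi 0) :=
    fun p t ht => (Real.continuousAt_rpow_const t p (Or.inl (ne_of_gt ht))).continuousWithinAt
  have hf₂cont : ContinuousOn (fun η : ℝ => η ^ (-n₂ - 1) * utld η) (Set.Ioi 0) :=
    (hrpow_cont _).mul hutld_cont
  have hf₁cont : ContinuousOn (fun η : ℝ => η ^ (-n₁ - 1) * utld η) (Set.Ioi 0) :=
    (hrpow_cont _).mul hutld_cont
  have hIccsub : ∀ a b : ℝ, 0 < a → Set.Icc a b ⊆ Set.Ioi 0 :=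
    fun a b ha t ht => lt_of_lt_of_le ha ht.1
  -- integrability of f₁ on Ioi y
  have hint₁ : ∀ y : ℝ, 0 < y →
      IntegrableOn (fun η : ℝ => η ^ (-n₁ - 1) * utld η) (Set.Ioi y) volume := by
    intro y hy
    have hg : IntegrableOn (fun η : ℝ => (|utld y| + |u 0|) * η ^ (-n₁ - 1))
        (Set.Ioi y) volume :=
      (integrableOn_Ioi_rpow_of_lt (by linarith) hy).const_mul _
    refine Integrable.mono' hg ?_ ?_
    · exact (hf₁cont.mono (fun t (ht : y < t) => lt_trans hy ht)).aestronglyMeasurable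
        measurableSet_Ioi
    · filter_upwards [ae_restrict_mem measurableSet_Ioi] with η hη
      have hη0 : 0 < η := lt_trans hy hη
      have h1 : utld η ≤ utld y := hutld_anti y hy η (le_of_lt hη)
      have h2 : u 0 ≤ utld η := hutld_lb η hη0
      have h3 : |utld η| ≤ |utld y| + |u 0| := by
        rcases abs_cases (utld η) with ⟨he, _⟩ | ⟨he, _⟩
        · have := le_abs_self (utld y); have := abs_nonneg (u 0); linarith
        · have := neg_le_abs (u 0); have := abs_nonneg (utld y); linarith
      have hrp : (0:ℝ) ≤ η ^ (-n₁ - 1) := Real.rpow_nonneg (le_of_lt hη0) _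
      calc ‖η ^ (-n₁ - 1) * utld η‖ = η ^ (-n₁ - 1) * |utld η| := by
            rw [norm_mul, Real.norm_eq_abs, Real.norm_eq_abs, abs_of_nonneg hrp]
        _ ≤ (|utld y| + |u 0|) * η ^ (-n₁ - 1) := by nlinarith
  -- integrability of f₂ on Ioo 0 y
  have hint₂ : ∀ y : ℝ, 0 < y →
      IntegrableOn (fun η : ℝ => η ^ (-n₂ - 1) * utld η) (Set.Ioo 0 y) volume := by
    intro y hy
    have hn₂ : (0:ℝ) < -n₂ := by linarith
    have hrpint : IntegrableOn (fun η : ℝ => η ^ (-n₂ - 1)) (Set.Ioo 0 y) volume :=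
      (intervalIntegral.integrableOn_Ioo_rpow_iff hy).mpr (by linarith)
    set B : ℝ := (∫ η in Set.Ioo 0 y, η ^ (-n₂) * I η) / (-n₂) +
      |utld y| * (∫ η in Set.Ioo 0 y, η ^ (-n₂ - 1)) with hBdef
    have hbd : ∀ ε : ℝ, 0 < ε → ε < y →
        (∫ η in Set.Ioo ε y, ‖η ^ (-n₂ - 1) * utld η‖) ≤ B := by
      intro ε hε hεy
      have hIccsub' : Set.Icc ε y ⊆ Set.Ioi 0 := hIccsub ε y hε
      have hIoosub : Set.Ioo ε y ⊆ Set.Ioo 0 y := Set.Ioo_subset_Ioo (le_of_lt hε) le_rfl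
      -- the dominating function on Ioo ε y
      set g : ℝ → ℝ := fun η => η ^ (-n₂ - 1) * (utld η - utld y) + η ^ (-n₂ - 1) * |utld y|
        with hgdef
      have hgcont : ContinuousOn g (Set.Ioi 0) :=
        (((hrpow_cont _).mul (hutld_cont.sub continuousOn_const)).add
          ((hrpow_cont _).mul continuousOn_const))
      have hgint : IntegrableOn g (Set.Ioo ε y) volume :=
        ((hgcont.mono hIccsub').integrableOn_Icc).mono_set Set.Ioo_subset_Icc_self
      have hfint : IntegrableOn (fun η : ℝ => η ^ (-n₂ - 1) * utld η) (Set.Ioo ε y) volume :=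
        ((hf₂cont.mono hIccsub').integrableOn_Icc).mono_set Set.Ioo_subset_Icc_self
      have step1 : (∫ η in Set.Ioo ε y, ‖η ^ (-n₂ - 1) * utld η‖) ≤ ∫ η in Set.Ioo ε y, g η := by
        refine setIntegral_mono_on hfint.norm hgint measurableSet_Ioo ?_
        intro η hη
        have hη0 : 0 < η := lt_trans hε hη.1
        have h1 : utld y ≤ utld η := hutld_anti η hη0 y (le_of_lt hη.2)
        have hrp : (0:ℝ) ≤ η ^ (-n₂ - 1) := Real.rpow_nonneg (le_of_lt hη0) _
        rw [norm_mul, Real.norm_eq_abs, Real.norm_eq_abs, abs_of_nonneg hrp]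
        show _ ≤ η ^ (-n₂ - 1) * (utld η - utld y) + η ^ (-n₂ - 1) * |utld y|
        rcases abs_cases (utld η) with ⟨he, _⟩ | ⟨he, _⟩ <;>
          rcases abs_cases (utld y) with ⟨hy', _⟩ | ⟨hy', _⟩ <;> nlinarith
      have hT1int : IntegrableOn (fun η : ℝ => η ^ (-n₂ - 1) * (utld η - utld y))
          (Set.Ioo ε y) volume :=
        (((((hrpow_cont _).mul (hutld_cont.sub continuousOn_const))).mono
          hIccsub').integrableOn_Icc).mono_set Set.Ioo_subset_Icc_self
      have hT2int : IntegrableOn (fun η : ℝ => η ^ (-n₂ - 1) * |utld y|)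
          (Set.Ioo ε y) volume := hrpint.mono_set hIoosub |>.mul_const _
      have step2 : (∫ η in Set.Ioo ε y, g η) =
          (∫ η in Set.Ioo ε y, η ^ (-n₂ - 1) * (utld η - utld y)) +
          (∫ η in Set.Ioo ε y, η ^ (-n₂ - 1) * |utld y|) :=
        integral_add hT1int hT2int
      -- T1 bound via integration by parts
      have hT1 : (∫ η in Set.Ioo ε y, η ^ (-n₂ - 1) * (utld η - utld y)) ≤
          (∫ η in Set.Ioo 0 y, η ^ (-n₂) * I η) / (-n₂) := by
        have husub : Set.uIcc ε y ⊆ Set.Ioi 0 := by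
          rw [Set.uIcc_of_le (le_of_lt hεy)]; exact hIccsub'
        have hw : ∀ x ∈ Set.uIcc ε y, HasDerivAt (fun η => utld η - utld y) (-(I x)) x :=
          fun x hx => ((hutld_deriv x (husub hx)).sub_const _)
        have hv : ∀ x ∈ Set.uIcc ε y,
            HasDerivAt (fun η : ℝ => η ^ (-n₂) / (-n₂)) (x ^ (-n₂ - 1)) x := by
          intro x hx
          have h := (Real.hasDerivAt_rpow_const (p := -n₂)
            (Or.inl (ne_of_gt (husub hx)))).div_const (-n₂)
          refine h.congr_deriv ?_
          rw [mul_comm, mul_div_assoc, div_self (ne_of_gt hn₂), mul_one]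
        have hw' : IntervalIntegrable (fun x => -(I x)) volume ε y :=
          ((hI_cont.mono husub).neg).intervalIntegrable
        have hv' : IntervalIntegrable (fun x : ℝ => x ^ (-n₂ - 1)) volume ε y :=
          ((hrpow_cont _).mono husub).intervalIntegrable
        have hibp := intervalIntegral.integral_mul_deriv_eq_deriv_mul hw hv hw' hv'
        have heq1 : (∫ η in Set.Ioo ε y, η ^ (-n₂ - 1) * (utld η - utld y)) =
            ∫ η in ε..y, (utld η - utld y) * η ^ (-n₂ - 1) := by
          rw [intervalIntegral.integral_of_le (le_of_lt hεy), integral_Ioc_eq_integral_Ioo]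
          exact setIntegral_congr_fun measurableSet_Ioo (fun η _ => by ring)
        rw [heq1, hibp]
        have hterm : (utld y - utld y) * (y ^ (-n₂) / (-n₂)) -
            (utld ε - utld y) * (ε ^ (-n₂) / (-n₂)) ≤ 0 := by
          have h1 : utld y ≤ utld ε := hutld_anti ε hε y (le_of_lt hεy)
          have h2 : (0:ℝ) < ε ^ (-n₂) := Real.rpow_pos_of_pos hε _
          have h3 : (0:ℝ) < ε ^ (-n₂) / (-n₂) := div_pos h2 hn₂
          nlinarith
        have hint : (- ∫ x in ε..y, -(I x) * (x ^ (-n₂) / (-n₂))) ≤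
            (∫ η in Set.Ioo 0 y, η ^ (-n₂) * I η) / (-n₂) := by
          have heq2 : (- ∫ x in ε..y, -(I x) * (x ^ (-n₂) / (-n₂))) =
              (∫ η in Set.Ioo ε y, η ^ (-n₂) * I η) / (-n₂) := by
            rw [← intervalIntegral.integral_neg]
            rw [intervalIntegral.integral_of_le (le_of_lt hεy), integral_Ioc_eq_integral_Ioo]
            rw [← integral_div]
            exact setIntegral_congr_fun measurableSet_Ioo (fun η _ => by ring)
          rw [heq2]
          refine (div_le_div_iff_of_pos_right hn₂).mpr ?_
          refine setIntegral_mono_set (hI_int y hy) ?_ (HasSubset.Subset.eventuallyLE hIoosub)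
          filter_upwards [ae_restrict_mem measurableSet_Ioo] with η hη
          exact mul_nonneg (Real.rpow_nonneg (le_of_lt hη.1) _) (le_of_lt (hI_pos η hη.1))
        linarith
      -- T2 bound
      have hT2 : (∫ η in Set.Ioo ε y, η ^ (-n₂ - 1) * |utld y|) ≤
          |utld y| * (∫ η in Set.Ioo 0 y, η ^ (-n₂ - 1)) := by
        have heq : (∫ η in Set.Ioo ε y, η ^ (-n₂ - 1) * |utld y|) =
            |utld y| * ∫ η in Set.Ioo ε y, η ^ (-n₂ - 1) := by
          rw [← integral_const_mul]
          exact setIntegral_congr_fun measurableSet_Ioo (fun η _ => by ring)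
        rw [heq]
        refine mul_le_mul_of_nonneg_left ?_ (abs_nonneg _)
        refine setIntegral_mono_set hrpint ?_ (HasSubset.Subset.eventuallyLE hIoosub)
        filter_upwards [ae_restrict_mem measurableSet_Ioo] with η hη
        exact Real.rpow_nonneg (le_of_lt hη.1) _
      calc (∫ η in Set.Ioo ε y, ‖η ^ (-n₂ - 1) * utld η‖) ≤ _ := step1
        _ = _ := step2
        _ ≤ B := by rw [hBdef]; exact add_le_add hT1 hT2
    -- use AECover
    have htend : Tendsto (fun n : ℕ => y / (n + 2)) atTop (nhds 0) := by
      have h := (tendsto_const_div_atTop_nhds_zero_nat y).comp (tendsto_add_atTop_nat 2)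
      refine h.congr fun n => ?_
      simp only [Function.comp_apply]
      push_cast
      ring
    have hεn : ∀ n : ℕ, 0 < y / (n + 2) ∧ y / (n + 2) < y := by
      intro n
      constructor
      · positivity
      · exact div_lt_self hy (by have h0 : (0:ℝ) ≤ (n:ℝ) := Nat.cast_nonneg n; linarith)
    have hcover : AECover (volume.restrict (Set.Ioo 0 y)) atTop
        (fun n : ℕ => Set.Ioo (y / (n + 2)) y) := by
      refine ⟨?_, fun n => measurableSet_Ioo⟩
      filter_upwards [ae_restrict_mem measurableSet_Ioo] with x hx
      filter_upwards [htend.eventually_lt_const hx.1] with n hn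
      exact ⟨hn, hx.2⟩
    have hsubn : ∀ n : ℕ, Set.Ioo (y / (n + 2)) y ⊆ Set.Ioo 0 y :=
      fun n => Set.Ioo_subset_Ioo (le_of_lt (hεn n).1) le_rfl
    have hfi : ∀ n : ℕ, IntegrableOn (fun η : ℝ => η ^ (-n₂ - 1) * utld η)
        (Set.Ioo (y / (n + 2)) y) (volume.restrict (Set.Ioo 0 y)) := by
      intro n
      rw [IntegrableOn, Measure.restrict_restrict measurableSet_Ioo,
        Set.inter_eq_left.mpr (hsubn n)]
      exact ((hf₂cont.mono (hIccsub _ _ (hεn n).1)).integrableOn_Icc).mono_set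
        Set.Ioo_subset_Icc_self
    have := hcover.integrable_of_integral_norm_bounded B hfi ?_
    · exact this
    · refine Eventually.of_forall fun n => ?_
      rw [Measure.restrict_restrict measurableSet_Ioo, Set.inter_eq_left.mpr (hsubn n)]
      exact hbd _ (hεn n).1 (hεn n).2
  have huIccsub : ∀ a b : ℝ, 0 < a → 0 < b → Set.uIcc a b ⊆ Set.Ioi 0 := by
    intro a b ha hb t ht
    exact lt_of_lt_of_le (lt_min ha hb) ht.1
  -- derivative of F
  have hF_deriv : ∀ y : ℝ, 0 < y →
      HasDerivAt (fun t => ∫ η in Set.Ioo 0 t, η ^ (-n₂ - 1) * utld η)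
        (y ^ (-n₂ - 1) * utld y) y := by
    intro y hy
    have ha : 0 < y / 2 := half_pos hy
    have hay : y / 2 < y := half_lt_self hy
    have hii : IntervalIntegrable (fun η : ℝ => η ^ (-n₂ - 1) * utld η) volume (y/2) y :=
      (hf₂cont.mono (huIccsub _ _ ha hy)).intervalIntegrable
    have hmain : HasDerivAt
        (fun t => (∫ η in Set.Ioo 0 (y/2), η ^ (-n₂ - 1) * utld η) +
          ∫ η in (y/2)..t, η ^ (-n₂ - 1) * utld η)
        (y ^ (-n₂ - 1) * utld y) y :=
      (intervalIntegral.integral_hasDerivAt_right hii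
        (hf₂cont.stronglyMeasurableAtFilter isOpen_Ioi y hy)
        (hf₂cont.continuousAt (Ioi_mem_nhds hy))).const_add _
    refine HasDerivAt.congr_of_eventuallyEq hmain ?_
    filter_upwards [Ioi_mem_nhds hay] with t (ht : y/2 < t)
    have ht0 : 0 < t := lt_trans ha ht
    have hsplit : Set.Ioc 0 t = Set.Ioc 0 (y/2) ∪ Set.Ioc (y/2) t :=
      (Set.Ioc_union_Ioc_eq_Ioc (le_of_lt ha) (le_of_lt ht)).symm
    calc (∫ η in Set.Ioo 0 t, η ^ (-n₂ - 1) * utld η)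
        = ∫ η in Set.Ioc 0 t, η ^ (-n₂ - 1) * utld η := (integral_Ioc_eq_integral_Ioo).symm
      _ = (∫ η in Set.Ioc 0 (y/2), η ^ (-n₂ - 1) * utld η) +
          ∫ η in Set.Ioc (y/2) t, η ^ (-n₂ - 1) * utld η := by
          rw [hsplit]
          exact setIntegral_union (Set.Ioc_disjoint_Ioc_of_le le_rfl) measurableSet_Ioc
            ((integrableOn_Ioc_iff_integrableOn_Ioo).mpr (hint₂ _ ha))
            (((hf₂cont.mono (hIccsub _ _ ha)).integrableOn_Icc).mono_set
              Set.Ioc_subset_Icc_self)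
      _ = (∫ η in Set.Ioo 0 (y/2), η ^ (-n₂ - 1) * utld η) +
          ∫ η in (y/2)..t, η ^ (-n₂ - 1) * utld η := by
          rw [integral_Ioc_eq_integral_Ioo (f := fun η => η ^ (-n₂ - 1) * utld η) (x := 0),
            intervalIntegral.integral_of_le (le_of_lt ht)]
  -- derivative of G
  have hG_deriv : ∀ y : ℝ, 0 < y →
      HasDerivAt (fun t => ∫ η in Set.Ioi t, η ^ (-n₁ - 1) * utld η)
        (-(y ^ (-n₁ - 1) * utld y)) y := by
    intro y hy
    have ha : 0 < y / 2 := half_pos hy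
    have hay : y / 2 < y := half_lt_self hy
    have hii : IntervalIntegrable (fun η : ℝ => η ^ (-n₁ - 1) * utld η) volume (y/2) y :=
      (hf₁cont.mono (huIccsub _ _ ha hy)).intervalIntegrable
    have hmain : HasDerivAt
        (fun t => (∫ η in Set.Ioi (y/2), η ^ (-n₁ - 1) * utld η) -
          ∫ η in (y/2)..t, η ^ (-n₁ - 1) * utld η)
        (-(y ^ (-n₁ - 1) * utld y)) y :=
      ((intervalIntegral.integral_hasDerivAt_right hii
        (hf₁cont.stronglyMeasurableAtFilter isOpen_Ioi y hy)
        (hf₁cont.continuousAt (Ioi_mem_nhds hy))).const_sub _)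
    refine HasDerivAt.congr_of_eventuallyEq hmain ?_
    filter_upwards [Ioi_mem_nhds hay] with t (ht : y/2 < t)
    have ht0 : 0 < t := lt_trans ha ht
    have hsplit : Set.Ioi (y/2) = Set.Ioc (y/2) t ∪ Set.Ioi t :=
      (Set.Ioc_union_Ioi_eq_Ioi (le_of_lt ht)).symm
    have hsum : (∫ η in Set.Ioi (y/2), η ^ (-n₁ - 1) * utld η) =
        (∫ η in Set.Ioc (y/2) t, η ^ (-n₁ - 1) * utld η) +
        ∫ η in Set.Ioi t, η ^ (-n₁ - 1) * utld η := by
      rw [hsplit]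
      exact setIntegral_union (Set.Ioc_disjoint_Ioi le_rfl) measurableSet_Ioi
        (((hf₁cont.mono (hIccsub _ _ ha)).integrableOn_Icc).mono_set Set.Ioc_subset_Icc_self)
        (hint₁ t ht0)
    rw [hsum, intervalIntegral.integral_of_le (le_of_lt ht)]
    ring
  have hθ2 : (0:ℝ) < θ ^ 2 := by positivity
  have hn12 : n₂ < n₁ := by linarith
  set C : ℝ := 2 / (θ ^ 2 * (n₁ - n₂)) with hC
  set F : ℝ → ℝ := fun t => ∫ η in Set.Ioo 0 t, η ^ (-n₂ - 1) * utld η with hFdef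
  set G : ℝ → ℝ := fun t => ∫ η in Set.Ioi t, η ^ (-n₁ - 1) * utld η with hGdef
  -- rpow identities
  have hids : ∀ y : ℝ, 0 < y → ∀ n : ℝ,
      y ^ (n - 1) = y ^ n / y ∧ y ^ (n - 2) = y ^ n / y ^ 2 ∧
      y ^ (-n - 1) = 1 / (y ^ n * y) := by
    intro y hy n
    refine ⟨?_, ?_, ?_⟩
    · rw [Real.rpow_sub hy, Real.rpow_one]
    · rw [Real.rpow_sub hy, Real.rpow_two]
    · rw [show -n - 1 = -(n + 1) by ring, Real.rpow_neg hy.le, Real.rpow_add hy,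
        Real.rpow_one, one_div]
  refine ⟨fun y => C * (n₂ * y ^ (n₂ - 1) * F y + n₁ * y ^ (n₁ - 1) * G y),
    fun y => C * (n₂ * ((n₂ - 1) * y ^ (n₂ - 2)) * F y
      + n₂ * y ^ (n₂ - 1) * (y ^ (-n₂ - 1) * utld y)
      + (n₁ * ((n₁ - 1) * y ^ (n₁ - 2)) * G y
      - n₁ * y ^ (n₁ - 1) * (y ^ (-n₁ - 1) * utld y))), ?_, ?_, ?_, ?_, ?_⟩
  · -- J_R has derivative J'
    intro y hy
    have h1 : HasDerivAt (fun t : ℝ => t ^ n₂) (n₂ * y ^ (n₂ - 1)) y :=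
      Real.hasDerivAt_rpow_const (Or.inl hy.ne')
    have h3 : HasDerivAt (fun t : ℝ => t ^ n₁) (n₁ * y ^ (n₁ - 1)) y :=
      Real.hasDerivAt_rpow_const (Or.inl hy.ne')
    have h5 := ((h1.mul (hF_deriv y hy)).add (h3.mul (hG_deriv y hy))).const_mul C
    have h6 : HasDerivAt (fun t => C * (t ^ n₂ * F t + t ^ n₁ * G t))
        (C * (n₂ * y ^ (n₂ - 1) * F y + n₁ * y ^ (n₁ - 1) * G y)) y := by
      refine h5.congr_deriv ?_
      obtain ⟨e1, e2, e3⟩ := hids y hy n₂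
      obtain ⟨f1, f2, f3⟩ := hids y hy n₁
      rw [e1, e3, f1, f3]
      have ha : y ^ n₂ ≠ 0 := (Real.rpow_pos_of_pos hy n₂).ne'
      have hb : y ^ n₁ ≠ 0 := (Real.rpow_pos_of_pos hy n₁).ne'
      field_simp
      ring
    refine HasDerivAt.congr_of_eventuallyEq h6 ?_
    filter_upwards [Ioi_mem_nhds hy] with t (ht : 0 < t)
    rw [hJR t ht]
  · -- J' has derivative J''
    intro y hy
    have h1 : HasDerivAt (fun t : ℝ => t ^ (n₂ - 1)) ((n₂ - 1) * y ^ (n₂ - 2)) y := by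
      have h := Real.hasDerivAt_rpow_const (x := y) (p := n₂ - 1) (Or.inl hy.ne')
      rwa [show n₂ - 1 - 1 = n₂ - 2 by ring] at h
    have h3 : HasDerivAt (fun t : ℝ => t ^ (n₁ - 1)) ((n₁ - 1) * y ^ (n₁ - 2)) y := by
      have h := Real.hasDerivAt_rpow_const (x := y) (p := n₁ - 1) (Or.inl hy.ne')
      rwa [show n₁ - 1 - 1 = n₁ - 2 by ring] at h
    have h5 := (((h1.const_mul n₂).mul (hF_deriv y hy)).add
      ((h3.const_mul n₁).mul (hG_deriv y hy))).const_mul C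
    refine h5.congr_deriv ?_
    ring
  · -- continuity of J'
    intro y hy
    have h1 : HasDerivAt (fun t : ℝ => t ^ (n₂ - 1)) ((n₂ - 1) * y ^ (n₂ - 2)) y := by
      have h := Real.hasDerivAt_rpow_const (x := y) (p := n₂ - 1) (Or.inl hy.ne')
      rwa [show n₂ - 1 - 1 = n₂ - 2 by ring] at h
    have h3 : HasDerivAt (fun t : ℝ => t ^ (n₁ - 1)) ((n₁ - 1) * y ^ (n₁ - 2)) y := by
      have h := Real.hasDerivAt_rpow_const (x := y) (p := n₁ - 1) (Or.inl hy.ne')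
      rwa [show n₁ - 1 - 1 = n₁ - 2 by ring] at h
    have h5 := (((h1.const_mul n₂).mul (hF_deriv y hy)).add
      ((h3.const_mul n₁).mul (hG_deriv y hy))).const_mul C
    exact h5.continuousAt.continuousWithinAt
  · -- continuity of J''
    have hFcont : ContinuousOn F (Set.Ioi 0) :=
      fun t ht => (hF_deriv t ht).continuousAt.continuousWithinAt
    have hGcont : ContinuousOn G (Set.Ioi 0) :=
      fun t ht => (hG_deriv t ht).continuousAt.continuousWithinAt
    refine continuousOn_const.mul ?_
    refine ContinuousOn.add (ContinuousOn.add ?_ ?_) (ContinuousOn.sub ?_ ?_)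
    · exact (continuousOn_const.mul (continuousOn_const.mul (hrpow_cont _))).mul hFcont
    · exact (continuousOn_const.mul (hrpow_cont _)).mul ((hrpow_cont _).mul hutld_cont)
    · exact (continuousOn_const.mul (continuousOn_const.mul (hrpow_cont _))).mul hGcont
    · exact (continuousOn_const.mul (hrpow_cont _)).mul ((hrpow_cont _).mul hutld_cont)
  · -- the ODE
    intro y hy
    have hz₂ : θ ^ 2 / 2 * (n₂ * (n₂ - 1)) + (δ - r) * n₂ - δ = 0 := by
      linear_combination hroot₂
    have hz₁ : θ ^ 2 / 2 * (n₁ * (n₁ - 1)) + (δ - r) * n₁ - δ = 0 := by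
      linear_combination hroot₁
    have hzc : C * (θ ^ 2 / 2) * (n₂ - n₁) + 1 = 0 := by
      rw [hC]
      have h1 : θ ^ 2 ≠ 0 := hθ2.ne'
      have h2 : n₁ - n₂ ≠ 0 := sub_ne_zero.mpr (ne_of_gt hn12)
      field_simp
      ring
    rw [hJR y hy]
    have key : θ ^ 2 / 2 * y ^ 2 *
          (C * (n₂ * ((n₂ - 1) * y ^ (n₂ - 2)) * F y
            + n₂ * y ^ (n₂ - 1) * (y ^ (-n₂ - 1) * utld y)
            + (n₁ * ((n₁ - 1) * y ^ (n₁ - 2)) * G y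
            - n₁ * y ^ (n₁ - 1) * (y ^ (-n₁ - 1) * utld y))))
        + (δ - r) * y * (C * (n₂ * y ^ (n₂ - 1) * F y + n₁ * y ^ (n₁ - 1) * G y))
        - δ * (C * (y ^ n₂ * F y + y ^ n₁ * G y)) + utld y
        = C * (θ ^ 2 / 2 * (n₂ * (n₂ - 1)) + (δ - r) * n₂ - δ) * (y ^ n₂ * F y)
        + C * (θ ^ 2 / 2 * (n₁ * (n₁ - 1)) + (δ - r) * n₁ - δ) * (y ^ n₁ * G y)
        + (C * (θ ^ 2 / 2) * (n₂ - n₁) + 1) * utld y := by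
      obtain ⟨e1, e2, e3⟩ := hids y hy n₂
      obtain ⟨f1, f2, f3⟩ := hids y hy n₁
      rw [e1, e2, e3, f1, f2, f3]
      have ha : y ^ n₂ ≠ 0 := (Real.rpow_pos_of_pos hy n₂).ne'
      have hb : y ^ n₁ ≠ 0 := (Real.rpow_pos_of_pos hy n₁).ne'
      have hyne : y ≠ 0 := hy.ne'
      field_simp
      ring
    rw [key, hz₂, hz₁, hzc]
    ring
end

section
/- For every z with 0 < z ≤ ẑ, one has φ₂(z,z) = z^{−n₂}h(z) − ∫₀^z η^{−n₂}I(η)dη < 0. -/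
open MeasureTheory Set Filter


lemma aux_I_surj (I : ℝ → ℝ) (hI_cont : ContinuousOn I (Set.Ioi 0))
    (hI_zero : Tendsto I (nhdsWithin 0 (Set.Ioi 0)) atTop)
    (hI_top : Tendsto I atTop (nhds 0)) :
    ∀ c : ℝ, 0 < c → ∃ y : ℝ, 0 < y ∧ I y = c := by
  intro c hc
  obtain ⟨y₁, hy₁pos, hy₁⟩ : ∃ y₁ : ℝ, 0 < y₁ ∧ c < I y₁ := by
    have h1 := (hI_zero.eventually (eventually_gt_atTop c))
    rcases (h1.and self_mem_nhdsWithin).exists with ⟨y, hy1, hy2⟩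
    exact ⟨y, hy2, hy1⟩
  obtain ⟨y₂, hy₂gt, hy₂⟩ : ∃ y₂ : ℝ, y₁ < y₂ ∧ I y₂ < c := by
    have h1 : ∀ᶠ y in atTop, I y < c := hI_top.eventually (Iio_mem_nhds hc)
    rcases (h1.and (eventually_gt_atTop y₁)).exists with ⟨y, hy1, hy2⟩
    exact ⟨y, hy2, hy1⟩
  have hsub : Icc y₁ y₂ ⊆ Ioi 0 := fun x hx => lt_of_lt_of_le hy₁pos hx.1
  have := intermediate_value_Icc' (le_of_lt hy₂gt) (hI_cont.mono hsub)
  have hmem : c ∈ Icc (I y₂) (I y₁) := ⟨le_of_lt hy₂, le_of_lt hy₁⟩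
  rcases this hmem with ⟨y, hy, hyc⟩
  exact ⟨y, lt_of_lt_of_le hy₁pos hy.1, hyc⟩

lemma aux_u'_anti (I u' : ℝ → ℝ)
    (hI_anti : StrictAntiOn I (Set.Ioi 0))
    (hI_left : ∀ y : ℝ, 0 < y → u' (I y) = y)
    (hI_surj : ∀ c : ℝ, 0 < c → ∃ y : ℝ, 0 < y ∧ I y = c) :
    StrictAntiOn u' (Set.Ioi 0) ∧ ∀ c : ℝ, 0 < c → 0 < u' c := by
  have key : ∀ c : ℝ, 0 < c → 0 < u' c ∧ ∃ y, 0 < y ∧ I y = c ∧ u' c = y := by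
    intro c hc
    obtain ⟨y, hy, hyc⟩ := hI_surj c hc
    have : u' c = y := by rw [← hyc, hI_left y hy]
    exact ⟨this ▸ hy, y, hy, hyc, this⟩
  constructor
  · intro c₁ hc₁ c₂ hc₂ hlt
    obtain ⟨-, y₁, hy₁, hIy₁, hu₁⟩ := key c₁ hc₁
    obtain ⟨-, y₂, hy₂, hIy₂, hu₂⟩ := key c₂ hc₂
    rw [hu₁, hu₂]
    by_contra hcon
    push_neg at hcon
    rcases eq_or_lt_of_le hcon with heq | hlt'
    · rw [← hIy₁, ← hIy₂, heq] at hlt; exact lt_irrefl _ hlt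
    · have := hI_anti (mem_Ioi.mpr hy₁) (mem_Ioi.mpr hy₂) hlt'
      rw [hIy₁, hIy₂] at this
      exact absurd hlt (not_lt.mpr (le_of_lt this))
  · exact fun c hc => (key c hc).1

lemma aux_sandwich (u u' I utld : ℝ → ℝ)
    (hu_cont : ContinuousOn u (Set.Ici 0))
    (hu_deriv : ∀ c : ℝ, 0 < c → HasDerivAt u (u' c) c)
    (hI_pos : ∀ y : ℝ, 0 < y → 0 < I y)
    (hI_left : ∀ y : ℝ, 0 < y → u' (I y) = y)
    (hI_anti : StrictAntiOn I (Set.Ioi 0))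
    (hu'_anti : StrictAntiOn u' (Set.Ioi 0))
    (hutld : ∀ y : ℝ, 0 < y → utld y = u (I y) - y * I y) :
    ∀ a b : ℝ, 0 < a → a ≤ b →
      (a - b) * I a ≤ utld b - utld a ∧ utld b - utld a ≤ (a - b) * I b := by
  intro a b ha hab
  rcases eq_or_lt_of_le hab with rfl | hab'
  · simp
  have hb : 0 < b := lt_trans ha hab'
  have hIa : 0 < I a := hI_pos a ha
  have hIb : 0 < I b := hI_pos b hb
  have hIlt : I b < I a := hI_anti (mem_Ioi.mpr ha) (mem_Ioi.mpr hb) hab'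
  obtain ⟨ξ, hξ, hξslope⟩ := exists_hasDerivAt_eq_slope u u' hIlt
    (hu_cont.mono (fun x hx => le_trans (le_of_lt hIb) hx.1))
    (fun x hx => hu_deriv x (lt_trans hIb hx.1))
  have hξpos : 0 < ξ := lt_trans hIb hξ.1
  have h1 : a < u' ξ := by
    have := hu'_anti (mem_Ioi.mpr hξpos) (mem_Ioi.mpr hIa) hξ.2
    rwa [hI_left a ha] at this
  have h2 : u' ξ < b := by
    have := hu'_anti (mem_Ioi.mpr hIb) (mem_Ioi.mpr hξpos) hξ.1
    rwa [hI_left b hb] at this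
  have hdiff : 0 < I a - I b := by linarith
  have heq : u (I a) - u (I b) = u' ξ * (I a - I b) := by
    rw [hξslope]; field_simp
  rw [hutld a ha, hutld b hb]
  constructor
  · nlinarith
  · nlinarith

lemma aux_utld_deriv (I utld : ℝ → ℝ)
    (hI_cont : ContinuousOn I (Set.Ioi 0))
    (hsand : ∀ a b : ℝ, 0 < a → a ≤ b →
      (a - b) * I a ≤ utld b - utld a ∧ utld b - utld a ≤ (a - b) * I b) :
    ∀ y : ℝ, 0 < y → HasDerivAt utld (-(I y)) y := by
  intro y hy
  rw [hasDerivAt_iff_tendsto_slope]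
  rw [← tendsto_sub_nhds_zero_iff]
  refine squeeze_zero_norm' (a := fun b => |I b - I y|) ?_ ?_
  · have hmem : Set.Ioi (0:ℝ) ∈ nhdsWithin y {y}ᶜ :=
      nhdsWithin_le_nhds (Ioi_mem_nhds hy)
    filter_upwards [hmem, self_mem_nhdsWithin] with b hb hbne
    have hbpos : (0:ℝ) < b := hb
    have hbne' : b ≠ y := hbne
    have habs : I y - I b ≤ |I b - I y| := by
      rw [abs_sub_comm]; exact le_abs_self _
    have habs' : I b - I y ≤ |I b - I y| := le_abs_self _
    have habs0 : (0:ℝ) ≤ |I b - I y| := abs_nonneg _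
    have hs : slope utld y b = (utld b - utld y) / (b - y) := slope_def_field utld y b
    rcases lt_or_gt_of_ne hbne' with hlt | hgt
    · -- b < y
      obtain ⟨h1, h2⟩ := hsand b y hbpos (le_of_lt hlt)
      have hd : 0 < y - b := by linarith
      have hs1 : -(I b) ≤ slope utld y b := by
        rw [hs, le_div_iff_of_neg (by linarith : b - y < 0)]
        linarith
      have hs2 : slope utld y b ≤ -(I y) := by
        rw [hs, div_le_iff_of_neg (by linarith : b - y < 0)]
        linarith
      rw [Real.norm_eq_abs, abs_le]
      constructor <;> linarith
    · -- y < b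
      obtain ⟨h1, h2⟩ := hsand y b hy (le_of_lt hgt)
      have hd : 0 < b - y := by linarith
      have hs1 : -(I y) ≤ slope utld y b := by
        rw [hs, le_div_iff₀ hd]
        linarith
      have hs2 : slope utld y b ≤ -(I b) := by
        rw [hs, div_le_iff₀ hd]
        linarith
      rw [Real.norm_eq_abs, abs_le]
      constructor <;> linarith
  · have hc : ContinuousAt I y := hI_cont.continuousAt (Ioi_mem_nhds hy)
    have : Tendsto (fun b => |I b - I y|) (nhds y) (nhds 0) := by
      have h2 : ContinuousAt (fun b => |I b - I y|) y := (hc.sub (continuousAt_const (y := I y))).abs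
      simpa using h2.tendsto
    exact this.mono_left nhdsWithin_le_nhds

lemma aux_branch_deriv (I utld : ℝ → ℝ)
    (hD : ∀ y : ℝ, 0 < y → HasDerivAt utld (-(I y)) y) (κ ε : ℝ) (hκ : 0 < κ) :
    ∀ x : ℝ, 0 < x → HasDerivAt (fun z => utld (z / κ) - utld z + ε * z)
      (ε - (1 / κ) * I (x / κ) + I x) x := by
  intro x hx
  have h1 : HasDerivAt (fun z : ℝ => utld (z / κ)) (-(I (x / κ)) * (1 / κ)) x := by
    have hg : HasDerivAt (fun z : ℝ => z / κ) (1 / κ) x := by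
      simpa using (hasDerivAt_id x).div_const κ
    exact (hD (x / κ) (by positivity)).comp x hg
  have h2 := hD x hx
  have h3 : HasDerivAt (fun z : ℝ => ε * z) ε x := by
    simpa using (hasDerivAt_id x).const_mul ε
  have := (h1.sub h2).add h3
  exact this.congr_deriv (by ring)

section hcont

variable (I utld : ℝ → ℝ) (κ₁ κ₂ ε₁ ε₂ z_S : ℝ) (h : ℝ → ℝ)

lemma aux_match
    (hκ₁ : 0 < κ₁) (hκ₂ : 0 < κ₂) (hzS_pos : 0 < z_S)
    (hzS_zero : (1 / z_S) * (utld (z_S / κ₁) - utld (z_S / κ₂) + z_S * (ε₁ - ε₂)) = 0) :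
    utld (z_S / κ₁) - utld z_S + ε₁ * z_S = utld (z_S / κ₂) - utld z_S + ε₂ * z_S := by
  have h0 : utld (z_S / κ₁) - utld (z_S / κ₂) + z_S * (ε₁ - ε₂) = 0 := by
    have := mul_eq_zero.mp hzS_zero
    rcases this with h1 | h2
    · exact absurd h1 (by positivity)
    · exact h2
  linarith

lemma aux_h_cont
    (hD : ∀ y : ℝ, 0 < y → HasDerivAt utld (-(I y)) y)
    (hκ₁ : 0 < κ₁) (hκ₂ : 0 < κ₂) (hzS_pos : 0 < z_S)
    (hmatch : utld (z_S / κ₁) - utld z_S + ε₁ * z_S = utld (z_S / κ₂) - utld z_S + ε₂ * z_S)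
    (hh₁ : ∀ z : ℝ, z_S < z → h z = utld (z / κ₁) - utld z + ε₁ * z)
    (hh₂ : ∀ z : ℝ, 0 < z → z ≤ z_S → h z = utld (z / κ₂) - utld z + ε₂ * z) :
    ContinuousOn h (Set.Ioi 0) := by
  set f1 : ℝ → ℝ := fun z => utld (z / κ₁) - utld z + ε₁ * z with hf1
  set f2 : ℝ → ℝ := fun z => utld (z / κ₂) - utld z + ε₂ * z with hf2
  have hc1 : ∀ x : ℝ, 0 < x → ContinuousAt f1 x := fun x hx =>
    (aux_branch_deriv I utld hD κ₁ ε₁ hκ₁ x hx).continuousAt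
  have hc2 : ∀ x : ℝ, 0 < x → ContinuousAt f2 x := fun x hx =>
    (aux_branch_deriv I utld hD κ₂ ε₂ hκ₂ x hx).continuousAt
  intro x hx
  have hx' : (0:ℝ) < x := hx
  rcases lt_trichotomy x z_S with hlt | heq | hgt
  · -- x < z_S : locally f2
    have hev : h =ᶠ[nhds x] f2 := by
      filter_upwards [Ioo_mem_nhds hx' hlt] with t ht
      exact hh₂ t ht.1 (le_of_lt ht.2)
    exact ((hc2 x hx').congr hev.symm).continuousWithinAt
  · -- x = z_S
    subst heq
    have hAt : ContinuousAt h x := by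
      rw [continuousAt_iff_continuous_left_right]
      constructor
      · -- left: h = f2 on Iic x near x
        have hev : h =ᶠ[nhdsWithin x (Iic x)] f2 := by
          filter_upwards [nhdsWithin_le_nhds (Ioi_mem_nhds hx'), self_mem_nhdsWithin]
            with t ht1 ht2
          exact hh₂ t ht1 ht2
        exact ((hc2 x hx').continuousWithinAt.congr_of_eventuallyEq hev
          (hh₂ x hx' le_rfl))
      · -- right: h = f1 on Ici x near x
        have hev : h =ᶠ[nhdsWithin x (Ici x)] f1 := by
          filter_upwards [self_mem_nhdsWithin] with t ht
          rcases eq_or_lt_of_le (Set.mem_Ici.mp ht) with rfl | hlt'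
          · rw [hh₂ _ hx' le_rfl]; exact hmatch.symm
          · exact hh₁ t hlt'
        refine (hc1 x hx').continuousWithinAt.congr_of_eventuallyEq hev ?_
        rw [hh₂ x hx' le_rfl]; exact hmatch.symm
    exact hAt.continuousWithinAt
  · -- z_S < x : locally f1
    have hev : h =ᶠ[nhds x] f1 := by
      filter_upwards [Ioi_mem_nhds hgt] with t ht
      exact hh₁ t ht
    exact ((hc1 x hx').congr hev.symm).continuousWithinAt

end hcont

lemma aux_h_neg_small (I utld : ℝ → ℝ) (κ₂ ε₂ z_S : ℝ) (h : ℝ → ℝ)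
    (hI_zero : Tendsto I (nhdsWithin 0 (Set.Ioi 0)) atTop)
    (hsand : ∀ a b : ℝ, 0 < a → a ≤ b →
      (a - b) * I a ≤ utld b - utld a ∧ utld b - utld a ≤ (a - b) * I b)
    (hκ₂ : 0 < κ₂) (hκ₂1 : κ₂ < 1) (hε₂ : 0 < ε₂) (hzS_pos : 0 < z_S)
    (hh₂ : ∀ z : ℝ, 0 < z → z ≤ z_S → h z = utld (z / κ₂) - utld z + ε₂ * z) :
    ∃ t₀ : ℝ, 0 < t₀ ∧ ∀ t : ℝ, 0 < t → t < t₀ → h t < 0 := by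
  have hdivtend : Tendsto (fun t : ℝ => t / κ₂) (nhdsWithin 0 (Set.Ioi 0))
      (nhdsWithin 0 (Set.Ioi 0)) := by
    apply tendsto_nhdsWithin_of_tendsto_nhds_of_eventually_within
    · have : Tendsto (fun t : ℝ => t / κ₂) (nhds 0) (nhds (0 / κ₂)) :=
        (continuous_id.div_const κ₂).tendsto 0
      simpa using this.mono_left nhdsWithin_le_nhds
    · filter_upwards [self_mem_nhdsWithin] with t ht
      exact div_pos ht hκ₂
  have hbig : ∀ᶠ t in nhdsWithin 0 (Set.Ioi 0), ε₂ / (1 / κ₂ - 1) < I (t / κ₂) :=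
    (hI_zero.comp hdivtend).eventually (eventually_gt_atTop _)
  rw [eventually_iff, mem_nhdsGT_iff_exists_Ioo_subset] at hbig
  obtain ⟨u, hu, hsub⟩ := hbig
  refine ⟨min u z_S, lt_min hu hzS_pos, fun t ht htlt => ?_⟩
  have htu : t < u := lt_of_lt_of_le htlt (min_le_left _ _)
  have htzS : t ≤ z_S := le_of_lt (lt_of_lt_of_le htlt (min_le_right _ _))
  have hIbig : ε₂ / (1 / κ₂ - 1) < I (t / κ₂) := hsub ⟨ht, htu⟩
  have hQ : (0:ℝ) < 1 / κ₂ - 1 := by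
    have : (1:ℝ) < 1 / κ₂ := (one_lt_div hκ₂).mpr hκ₂1
    linarith
  have htle : t ≤ t / κ₂ := by
    rw [le_div_iff₀ hκ₂]; nlinarith
  have hub := (hsand t (t / κ₂) ht htle).2
  rw [hh₂ t ht htzS]
  have hkey : t - t / κ₂ = -(t * (1 / κ₂ - 1)) := by field_simp; ring
  rw [hkey] at hub
  have h1 : ε₂ < (1 / κ₂ - 1) * I (t / κ₂) := by
    rw [div_lt_iff₀ hQ] at hIbig; linarith [hIbig]
  nlinarith [mul_pos ht hQ, mul_lt_mul_of_pos_left h1 ht]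

lemma aux_h_nonpos (h : ℝ → ℝ) (zhat : ℝ)
    (hzhat_pos : 0 < zhat) (hzhat_zero : h zhat = 0)
    (hzhat_uniq : ∀ z : ℝ, 0 < z → h z = 0 → z = zhat)
    (hcont : ContinuousOn h (Set.Ioi 0))
    (hneg : ∃ t₀ : ℝ, 0 < t₀ ∧ ∀ t : ℝ, 0 < t → t < t₀ → h t < 0) :
    ∀ z : ℝ, 0 < z → z ≤ zhat → h z ≤ 0 := by
  intro z hz hzle
  rcases eq_or_lt_of_le hzle with rfl | hzlt
  · exact le_of_eq hzhat_zero
  by_contra hpos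
  push_neg at hpos
  obtain ⟨t₀, ht₀, hneg'⟩ := hneg
  set t := min (t₀ / 2) (z / 2) with ht_def
  have htpos : 0 < t := lt_min (by linarith) (by linarith)
  have htlt : t < t₀ := lt_of_le_of_lt (min_le_left _ _) (by linarith)
  have htz : t < z := lt_of_le_of_lt (min_le_right _ _) (by linarith)
  have hht : h t < 0 := hneg' t htpos htlt
  have hc : ContinuousOn h (Icc t z) :=
    hcont.mono (fun x hx => lt_of_lt_of_le htpos hx.1)
  have hIVT := intermediate_value_Icc (le_of_lt htz) hc
  have h0mem : (0:ℝ) ∈ Icc (h t) (h z) := ⟨le_of_lt hht, le_of_lt hpos⟩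
  obtain ⟨c, hc1, hc2⟩ := hIVT h0mem
  have hcpos : 0 < c := lt_of_lt_of_le htpos hc1.1
  have he := hzhat_uniq c hcpos hc2
  have hl : c < zhat := lt_of_le_of_lt hc1.2 hzlt
  rw [he] at hl
  exact lt_irrefl _ hl


-- generic piecewise integrability over Ioo 0 z split at z_S
lemma aux_piecewise_int (z z_S : ℝ) (hz : 0 < z) (f b1 b2 D : ℝ → ℝ)
    (hb1 : ContinuousOn b1 (Set.Ioi 0)) (hb2 : ContinuousOn b2 (Set.Ioi 0))
    (heq2 : ∀ x ∈ Set.Ioo 0 z, x ≤ z_S → f x = b2 x)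
    (heq1 : ∀ x ∈ Set.Ioo 0 z, z_S < x → f x = b1 x)
    (hDint : IntegrableOn D (Set.Ioo 0 z) volume)
    (hbound : ∀ x ∈ Set.Ioo 0 z, |f x| ≤ D x) :
    IntegrableOn f (Set.Ioo 0 z) volume := by
  set S2 : Set ℝ := Set.Ioo 0 z ∩ Set.Iic z_S with hS2
  set S1 : Set ℝ := Set.Ioo 0 z ∩ Set.Ioi z_S with hS1
  have hS2m : MeasurableSet S2 := measurableSet_Ioo.inter measurableSet_Iic
  have hS1m : MeasurableSet S1 := measurableSet_Ioo.inter measurableSet_Ioi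
  have hunion : Set.Ioo 0 z = S2 ∪ S1 := by
    ext x; simp only [hS2, hS1, Set.mem_union, Set.mem_inter_iff, Set.mem_Iic, Set.mem_Ioi]
    constructor
    · intro hx; rcases le_or_gt x z_S with hc | hc
      · exact Or.inl ⟨hx, hc⟩
      · exact Or.inr ⟨hx, hc⟩
    · rintro (⟨hx, -⟩ | ⟨hx, -⟩) <;> exact hx
  have key : ∀ (S : Set ℝ) (b : ℝ → ℝ), MeasurableSet S → S ⊆ Set.Ioo 0 z →
      ContinuousOn b (Set.Ioi 0) → (∀ x ∈ S, f x = b x) → IntegrableOn f S volume := by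
    intro S b hSm hSsub hbc heq
    have hsub' : S ⊆ Set.Ioi 0 := fun x hx => (hSsub hx).1
    have hmeas : AEStronglyMeasurable b (volume.restrict S) :=
      (hbc.mono hsub').aestronglyMeasurable hSm
    have hDS : IntegrableOn D S volume := hDint.mono_set hSsub
    have hbint : IntegrableOn b S volume := by
      refine Integrable.mono hDS hmeas ?_
      rw [ae_restrict_iff' hSm]
      refine Filter.Eventually.of_forall (fun x hx => ?_)
      rw [Real.norm_eq_abs, Real.norm_eq_abs, ← heq x hx]
      exact le_trans (hbound x (hSsub hx)) (le_abs_self _)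
    exact hbint.congr_fun (fun x hx => (heq x hx).symm) hSm
  rw [hunion]
  refine IntegrableOn.union ?_ ?_
  · exact key S2 b2 hS2m Set.inter_subset_left hb2 (fun x hx => heq2 x hx.1 hx.2)
  · exact key S1 b1 hS1m Set.inter_subset_left hb1 (fun x hx => heq1 x hx.1 hx.2)

-- rpow integrable on Ioo 0 z
lemma aux_rpow_int (p z : ℝ) (hp : -1 < p) (hz : 0 < z) :
    IntegrableOn (fun η : ℝ => η ^ p) (Set.Ioo 0 z) volume := by
  have h1 : IntervalIntegrable (fun η : ℝ => η ^ p) volume 0 z :=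
    intervalIntegral.intervalIntegrable_rpow' hp
  rw [intervalIntegrable_iff_integrableOn_Ioc_of_le (le_of_lt hz)] at h1
  exact h1.mono_set Set.Ioo_subset_Ioc_self

section bounds
variable (I utld : ℝ → ℝ) (κ₁ κ₂ ε₁ ε₂ z_S : ℝ) (chat ehat h : ℝ → ℝ)

lemma aux_chat_bound
    (hI_pos : ∀ y : ℝ, 0 < y → 0 < I y)
    (hI_anti : StrictAntiOn I (Set.Ioi 0))
    (hκ₁ : 0 < κ₁) (hκ₁₂ : κ₁ < κ₂) (hκ₂ : κ₂ < 1) (hzS_pos : 0 < z_S)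
    (hchat₁ : ∀ η : ℝ, z_S < η → chat η = (1 / κ₁) * I (η / κ₁))
    (hchat₂ : ∀ η : ℝ, 0 < η → η ≤ z_S → chat η = (1 / κ₂) * I (η / κ₂)) :
    ∀ x : ℝ, 0 < x → 0 < chat x ∧ chat x ≤ (1 / κ₁) * I x := by
  intro x hx
  have hκ₂0 : 0 < κ₂ := lt_trans hκ₁ hκ₁₂
  have hIanti' : ∀ κ : ℝ, 0 < κ → κ < 1 → I (x / κ) < I x := by
    intro κ hκ hκ1
    apply hI_anti (Set.mem_Ioi.mpr hx) (Set.mem_Ioi.mpr (by positivity))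
    rw [lt_div_iff₀ hκ]; nlinarith
  rcases le_or_gt x z_S with hle | hgt
  · rw [hchat₂ x hx hle]
    have hIp : 0 < I (x / κ₂) := hI_pos _ (by positivity)
    constructor
    · positivity
    · have h1 : I (x / κ₂) ≤ I x := le_of_lt (hIanti' κ₂ hκ₂0 hκ₂)
      have h2 : (1:ℝ) / κ₂ ≤ 1 / κ₁ := by
        apply div_le_div_of_nonneg_left (by norm_num) hκ₁ (le_of_lt hκ₁₂)
      have hIx : 0 < I x := hI_pos x hx
      exact mul_le_mul h2 h1 (le_of_lt hIp) (by positivity)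
  · rw [hchat₁ x hgt]
    have hIp : 0 < I (x / κ₁) := hI_pos _ (by positivity)
    constructor
    · positivity
    · have h1 : I (x / κ₁) ≤ I x := le_of_lt (hIanti' κ₁ hκ₁ (lt_trans hκ₁₂ hκ₂))
      have : (0:ℝ) < 1 / κ₁ := by positivity
      nlinarith

lemma aux_h_bound
    (hI_pos : ∀ y : ℝ, 0 < y → 0 < I y)
    (hsand : ∀ a b : ℝ, 0 < a → a ≤ b →
      (a - b) * I a ≤ utld b - utld a ∧ utld b - utld a ≤ (a - b) * I b)
    (hκ₁ : 0 < κ₁) (hκ₁₂ : κ₁ < κ₂) (hκ₂ : κ₂ < 1)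
    (hε₂ : 0 < ε₂) (hε₁₂ : ε₂ < ε₁) (hzS_pos : 0 < z_S)
    (hh₁ : ∀ z : ℝ, z_S < z → h z = utld (z / κ₁) - utld z + ε₁ * z)
    (hh₂ : ∀ z : ℝ, 0 < z → z ≤ z_S → h z = utld (z / κ₂) - utld z + ε₂ * z) :
    ∀ x : ℝ, 0 < x → |h x| ≤ (1 / κ₁ - 1) * (x * I x) + ε₁ * x := by
  intro x hx
  have hκ₂0 : 0 < κ₂ := lt_trans hκ₁ hκ₁₂
  have hIx : 0 < I x := hI_pos x hx
  have key : ∀ κ ε : ℝ, 0 < κ → κ < 1 → 0 < ε → ε ≤ ε₁ → 1 / κ ≤ 1 / κ₁ →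
      |utld (x / κ) - utld x + ε * x| ≤ (1 / κ₁ - 1) * (x * I x) + ε₁ * x := by
    intro κ ε hκ hκ1 hε hεle hκle
    have hxle : x ≤ x / κ := by
      rw [le_div_iff₀ hκ]; nlinarith
    obtain ⟨h1, h2⟩ := hsand x (x / κ) hx hxle
    have hIb : 0 < I (x / κ) := hI_pos _ (by positivity)
    have hxk : (x - x / κ) * I x = -((1 / κ - 1) * (x * I x)) := by field_simp; ring
    have hκ1' : (1:ℝ) < 1 / κ := (one_lt_div hκ).mpr hκ1
    rw [hxk] at h1
    have h3 : (1 / κ - 1) * (x * I x) ≤ (1 / κ₁ - 1) * (x * I x) := by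
      apply mul_le_mul_of_nonneg_right (by linarith) (by positivity)
    have p1 : 0 ≤ ε * x := by positivity
    have p2 : ε * x ≤ ε₁ * x := mul_le_mul_of_nonneg_right hεle (le_of_lt hx)
    have p3 : 0 ≤ (1 / κ₁ - 1) * (x * I x) := le_trans (by nlinarith) h3
    rw [abs_le]
    constructor
    · linarith
    · -- upper bound: utld(x/κ) - utld x ≤ (x - x/κ) * I (x/κ) ≤ 0
      have hneg : utld (x / κ) - utld x ≤ 0 := by
        have hfac : x - x / κ ≤ 0 := by linarith
        nlinarith
      linarith
  rcases le_or_gt x z_S with hle | hgt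
  · rw [hh₂ x hx hle]
    exact key κ₂ ε₂ hκ₂0 hκ₂ hε₂ (le_of_lt hε₁₂) (by
      apply div_le_div_of_nonneg_left (by norm_num) hκ₁ (le_of_lt hκ₁₂))
  · rw [hh₁ x hgt]
    exact key κ₁ ε₁ hκ₁ (lt_trans hκ₁₂ hκ₂) (lt_trans hε₂ hε₁₂) le_rfl le_rfl

end bounds

section intAB
variable (n₂ : ℝ) (I utld : ℝ → ℝ) (κ₁ κ₂ ε₁ ε₂ z_S : ℝ) (chat ehat h : ℝ → ℝ)

lemma aux_crpow (p : ℝ) : ContinuousOn (fun η : ℝ => η ^ p) (Set.Ioi 0) :=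
  ContinuousOn.rpow_const continuousOn_id (fun x hx => Or.inl (ne_of_gt hx))

lemma aux_cIdiv (κ : ℝ) (hκ : 0 < κ) (hI_cont : ContinuousOn I (Set.Ioi 0)) :
    ContinuousOn (fun η : ℝ => I (η / κ)) (Set.Ioi 0) :=
  hI_cont.comp ((continuous_id.div_const κ).continuousOn)
    (fun x hx => Set.mem_Ioi.mpr (div_pos hx hκ))

lemma aux_int_A
    (hn₂0 : n₂ < 0)
    (hI_pos : ∀ y : ℝ, 0 < y → 0 < I y)
    (hI_cont : ContinuousOn I (Set.Ioi 0))
    (hI_int : ∀ y : ℝ, 0 < y →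
      IntegrableOn (fun η => η ^ (-n₂) * I η) (Set.Ioo 0 y) volume)
    (hκ₁ : 0 < κ₁) (hκ₁₂ : κ₁ < κ₂) (hκ₂ : κ₂ < 1)
    (hε₂ : 0 < ε₂) (hε₁₂ : ε₂ < ε₁) (hzS_pos : 0 < z_S)
    (hchat₁ : ∀ η : ℝ, z_S < η → chat η = (1 / κ₁) * I (η / κ₁))
    (hchat₂ : ∀ η : ℝ, 0 < η → η ≤ z_S → chat η = (1 / κ₂) * I (η / κ₂))
    (hehat₁ : ∀ η : ℝ, z_S < η → ehat η = ε₁)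
    (hehat₂ : ∀ η : ℝ, 0 < η → η ≤ z_S → ehat η = ε₂)
    (hchat_bd : ∀ x : ℝ, 0 < x → 0 < chat x ∧ chat x ≤ (1 / κ₁) * I x) :
    ∀ z : ℝ, 0 < z →
      IntegrableOn (fun η => η ^ (-n₂) * (ehat η - chat η)) (Set.Ioo 0 z) volume := by
  intro z hz
  have hκ₂0 : 0 < κ₂ := lt_trans hκ₁ hκ₁₂
  set D : ℝ → ℝ := fun η => η ^ (-n₂) * ε₁ + (1 / κ₁) * (η ^ (-n₂) * I η) with hD
  have hDint : IntegrableOn D (Set.Ioo 0 z) volume := by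
    apply Integrable.add
    · exact (aux_rpow_int (-n₂) z (by linarith) hz).mul_const ε₁
    · exact (hI_int z hz).const_mul (1 / κ₁)
  apply aux_piecewise_int z z_S hz _
    (fun η => η ^ (-n₂) * (ε₁ - (1 / κ₁) * I (η / κ₁)))
    (fun η => η ^ (-n₂) * (ε₂ - (1 / κ₂) * I (η / κ₂))) D
  · exact (aux_crpow (-n₂)).mul
      (continuousOn_const.sub (continuousOn_const.mul (aux_cIdiv I κ₁ hκ₁ hI_cont)))
  · exact (aux_crpow (-n₂)).mul
      (continuousOn_const.sub (continuousOn_const.mul (aux_cIdiv I κ₂ hκ₂0 hI_cont)))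
  · intro x hx hxle
    rw [hehat₂ x hx.1 hxle, hchat₂ x hx.1 hxle]
  · intro x hx hxgt
    rw [hehat₁ x hxgt, hchat₁ x hxgt]
  · exact hDint
  · intro x hx
    have hx0 : 0 < x := hx.1
    have hrp : 0 < x ^ (-n₂) := Real.rpow_pos_of_pos hx0 _
    have hIx : 0 < I x := hI_pos x hx0
    obtain ⟨hc1, hc2⟩ := hchat_bd x hx0
    have he : 0 < ehat x ∧ ehat x ≤ ε₁ := by
      rcases le_or_gt x z_S with hle | hgt
      · rw [hehat₂ x hx0 hle]; exact ⟨hε₂, le_of_lt hε₁₂⟩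
      · rw [hehat₁ x hgt]; exact ⟨lt_trans hε₂ hε₁₂, le_rfl⟩
    have habs : |ehat x - chat x| ≤ ε₁ + (1 / κ₁) * I x := by
      rw [abs_le]; constructor <;> [linarith; linarith]
    calc |x ^ (-n₂) * (ehat x - chat x)| = x ^ (-n₂) * |ehat x - chat x| := by
          rw [abs_mul, abs_of_pos hrp]
      _ ≤ x ^ (-n₂) * (ε₁ + (1 / κ₁) * I x) :=
          mul_le_mul_of_nonneg_left habs (le_of_lt hrp)
      _ = D x := by rw [hD]; ring

lemma aux_int_B
    (hn₂0 : n₂ < 0)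
    (hI_pos : ∀ y : ℝ, 0 < y → 0 < I y)
    (hutld_cont : ContinuousOn utld (Set.Ioi 0))
    (hI_int : ∀ y : ℝ, 0 < y →
      IntegrableOn (fun η => η ^ (-n₂) * I η) (Set.Ioo 0 y) volume)
    (hκ₁ : 0 < κ₁) (hκ₁₂ : κ₁ < κ₂) (hκ₂ : κ₂ < 1) (hzS_pos : 0 < z_S)
    (hh₁ : ∀ z : ℝ, z_S < z → h z = utld (z / κ₁) - utld z + ε₁ * z)
    (hh₂ : ∀ z : ℝ, 0 < z → z ≤ z_S → h z = utld (z / κ₂) - utld z + ε₂ * z)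
    (hh_bd : ∀ x : ℝ, 0 < x → |h x| ≤ (1 / κ₁ - 1) * (x * I x) + ε₁ * x) :
    ∀ z : ℝ, 0 < z →
      IntegrableOn (fun η => η ^ (-n₂ - 1) * h η) (Set.Ioo 0 z) volume := by
  intro z hz
  have hκ₂0 : 0 < κ₂ := lt_trans hκ₁ hκ₁₂
  set D : ℝ → ℝ := fun η => (1 / κ₁ - 1) * (η ^ (-n₂) * I η) + ε₁ * η ^ (-n₂) with hD
  have hDint : IntegrableOn D (Set.Ioo 0 z) volume := by
    apply Integrable.add
    · exact (hI_int z hz).const_mul _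
    · exact (aux_rpow_int (-n₂) z (by linarith) hz).const_mul ε₁
  have hcomp : ∀ κ : ℝ, 0 < κ → ContinuousOn (fun η : ℝ => utld (η / κ)) (Set.Ioi 0) :=
    fun κ hκ => hutld_cont.comp ((continuous_id.div_const κ).continuousOn)
      (fun x hx => Set.mem_Ioi.mpr (div_pos hx hκ))
  apply aux_piecewise_int z z_S hz _
    (fun η => η ^ (-n₂ - 1) * (utld (η / κ₁) - utld η + ε₁ * η))
    (fun η => η ^ (-n₂ - 1) * (utld (η / κ₂) - utld η + ε₂ * η)) D
  · exact (aux_crpow (-n₂ - 1)).mul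
      (((hcomp κ₁ hκ₁).sub hutld_cont).add (continuousOn_const.mul continuousOn_id))
  · exact (aux_crpow (-n₂ - 1)).mul
      (((hcomp κ₂ hκ₂0).sub hutld_cont).add (continuousOn_const.mul continuousOn_id))
  · intro x hx hxle; rw [hh₂ x hx.1 hxle]
  · intro x hx hxgt; rw [hh₁ x hxgt]
  · exact hDint
  · intro x hx
    have hx0 : 0 < x := hx.1
    have hrp : 0 < x ^ (-n₂ - 1) := Real.rpow_pos_of_pos hx0 _
    have hxid : x ^ (-n₂ - 1) * x = x ^ (-n₂) := by
      nth_rewrite 2 [← Real.rpow_one x]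
      rw [← Real.rpow_add hx0]
      norm_num
    calc |x ^ (-n₂ - 1) * h x| = x ^ (-n₂ - 1) * |h x| := by
          rw [abs_mul, abs_of_pos hrp]
      _ ≤ x ^ (-n₂ - 1) * ((1 / κ₁ - 1) * (x * I x) + ε₁ * x) :=
          mul_le_mul_of_nonneg_left (hh_bd x hx0) (le_of_lt hrp)
      _ = D x := by
          simp only [hD, ← hxid]; ring

end intAB

-- splitting of Ioo 0 z at t
lemma aux_split_s14 (F : ℝ → ℝ) (t z : ℝ) (ht : 0 < t) (htz : t < z)
    (hFi : IntegrableOn F (Set.Ioo 0 z) volume) :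
    ∫ η in Set.Ioo 0 z, F η = (∫ η in Set.Ioo 0 t, F η) + ∫ η in Set.Ioo t z, F η := by
  have hun : Set.Ioo 0 z = Set.Ioo 0 t ∪ Set.Ico t z := by
    rw [Set.Ioo_union_Ico_eq_Ioo ht (le_of_lt htz)]
  have hdisj : Disjoint (Set.Ioo 0 t) (Set.Ico t z) := by
    apply Set.disjoint_left.mpr
    rintro x ⟨-, h2⟩ ⟨h3, -⟩
    exact absurd h3 (not_le.mpr h2)
  rw [hun, setIntegral_union hdisj measurableSet_Ico
    (hFi.mono_set (by rw [hun]; exact Set.subset_union_left))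
    (hFi.mono_set (by rw [hun]; exact Set.subset_union_right)),
    integral_Ico_eq_integral_Ioo]

lemma aux_tail_nonneg (F : ℝ → ℝ) (z : ℝ) (hz : 0 < z)
    (hFi : IntegrableOn F (Set.Ioo 0 z) volume)
    (hF0 : ∀ x ∈ Set.Ioo 0 z, 0 ≤ F x) :
    Tendsto (fun t => ∫ η in Set.Ioo 0 t, F η) (nhdsWithin 0 (Set.Ioi 0)) (nhds 0) := by
  set M : ℝ → ℝ := fun t => ∫ η in Set.Ioo 0 t, F η with hM
  have hF0' : 0 ≤ᵐ[volume.restrict (Set.Ioo 0 z)] F :=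
    (ae_restrict_mem measurableSet_Ioo).mono (fun x hx => hF0 x hx)
  -- monotone sets
  have hseq : Tendsto (fun n : ℕ => M (z / (n + 2))) atTop (nhds 0) := by
    have hsm : ∀ n : ℕ, MeasurableSet (Set.Ioo (z / (n + 2)) z) := fun n => measurableSet_Ioo
    have hmono : Monotone (fun n : ℕ => Set.Ioo (z / (n + 2)) z) := by
      intro m n hmn
      apply Set.Ioo_subset_Ioo _ le_rfl
      apply div_le_div_of_nonneg_left (le_of_lt hz) (by positivity)
      have : (m : ℝ) ≤ n := Nat.cast_le.mpr hmn
      linarith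
    have hUn : (⋃ n : ℕ, Set.Ioo (z / (n + 2)) z) = Set.Ioo 0 z := by
      ext x
      simp only [Set.mem_iUnion, Set.mem_Ioo]
      constructor
      · rintro ⟨n, h1, h2⟩
        exact ⟨lt_trans (by positivity) h1, h2⟩
      · rintro ⟨h1, h2⟩
        obtain ⟨n, hn⟩ := exists_nat_gt (z / x)
        refine ⟨n, ?_, h2⟩
        rw [div_lt_iff₀ (by positivity)] at hn ⊢
        nlinarith
    have h1 := tendsto_setIntegral_of_monotone hsm hmono (hUn ▸ hFi)
    rw [hUn] at h1
    have h2 : ∀ n : ℕ, M (z / (n + 2)) =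
        (∫ η in Set.Ioo 0 z, F η) - ∫ η in Set.Ioo (z / (n + 2)) z, F η := by
      intro n
      have htpos : 0 < z / ((n : ℝ) + 2) := by positivity
      have htlt : z / ((n : ℝ) + 2) < z := by
        rw [div_lt_iff₀ (by positivity)]; nlinarith
      rw [hM]; rw [aux_split_s14 F (z / (n + 2)) z htpos htlt hFi]; ring
    simp_rw [h2]
    have := (tendsto_const_nhds (x := ∫ η in Set.Ioo 0 z, F η)
      (f := atTop (α := ℕ))).sub h1
    simpa using this
  -- epsilon argument
  rw [Metric.tendsto_nhdsWithin_nhds]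
  intro ε hε
  have : ∀ᶠ n : ℕ in atTop, dist (M (z / (n + 2))) 0 < ε := hseq.eventually
    (Metric.ball_mem_nhds 0 hε)
  obtain ⟨N, hN⟩ := this.exists
  refine ⟨z / ((N : ℝ) + 2), by positivity, fun t ht hdist => ?_⟩
  have ht0 : 0 < t := ht
  have htN : t < z / ((N : ℝ) + 2) := by
    rw [Real.dist_eq, sub_zero, abs_of_pos ht0] at hdist
    exact hdist
  have hNz : z / ((N : ℝ) + 2) < z := by
    rw [div_lt_iff₀ (by positivity)]; nlinarith
  have hmono : M t ≤ M (z / (N + 2)) := by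
    apply setIntegral_mono_set (hFi.mono_set ?_) ?_ ?_
    · exact Set.Ioo_subset_Ioo le_rfl (le_of_lt hNz)
    · exact (ae_restrict_mem measurableSet_Ioo).mono
        (fun x hx => hF0 x ⟨hx.1, lt_trans hx.2 hNz⟩)
    · exact HasSubset.Subset.eventuallyLE (Set.Ioo_subset_Ioo le_rfl (le_of_lt htN))
  have hnonneg : 0 ≤ M t := by
    apply setIntegral_nonneg measurableSet_Ioo
    intro x hx
    exact hF0 x ⟨hx.1, lt_trans hx.2 (lt_trans htN hNz)⟩
  rw [Real.dist_eq, sub_zero, abs_of_nonneg hnonneg]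
  rw [Real.dist_eq, sub_zero] at hN
  calc M t ≤ M (z / (N + 2)) := hmono
    _ ≤ |M (z / (N + 2))| := le_abs_self _
    _ < ε := hN

lemma aux_tail_signed (g : ℝ → ℝ) (z : ℝ) (hz : 0 < z)
    (hgi : IntegrableOn g (Set.Ioo 0 z) volume) :
    Tendsto (fun t => ∫ η in Set.Ioo 0 t, g η) (nhdsWithin 0 (Set.Ioi 0)) (nhds 0) := by
  refine squeeze_zero_norm' (a := fun t => ∫ η in Set.Ioo 0 t, |g η|) ?_ ?_
  · refine Filter.Eventually.of_forall (fun t => ?_)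
    calc ‖∫ η in Set.Ioo 0 t, g η‖ ≤ ∫ η in Set.Ioo 0 t, ‖g η‖ :=
        norm_integral_le_integral_norm g
      _ = ∫ η in Set.Ioo 0 t, |g η| := by simp [Real.norm_eq_abs]
  · exact aux_tail_nonneg (fun x => |g x|) z hz hgi.abs
      (fun x _ => abs_nonneg _)

lemma aux_rpow_tendsto_zero (p : ℝ) (hp : 0 < p) :
    Tendsto (fun t : ℝ => t ^ p) (nhdsWithin 0 (Set.Ioi 0)) (nhds 0) := by
  have hc : ContinuousAt (fun t : ℝ => t ^ p) 0 :=
    Real.continuousAt_rpow_const 0 p (Or.inr (le_of_lt hp))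
  have := hc.tendsto
  rw [Real.zero_rpow (ne_of_gt hp)] at this
  exact this.mono_left nhdsWithin_le_nhds

lemma aux_tIt_tendsto (n₂ : ℝ) (I : ℝ → ℝ) (z : ℝ) (hn₂0 : n₂ < 0) (hz : 0 < z)
    (hI_pos : ∀ y : ℝ, 0 < y → 0 < I y)
    (hI_anti : StrictAntiOn I (Set.Ioi 0))
    (hI_cont : ContinuousOn I (Set.Ioi 0))
    (hI_int : IntegrableOn (fun η => η ^ (-n₂) * I η) (Set.Ioo 0 z) volume) :
    Tendsto (fun t : ℝ => t ^ (1 - n₂) * I t) (nhdsWithin 0 (Set.Ioi 0)) (nhds 0) := by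
  have htail := aux_tail_nonneg (fun η => η ^ (-n₂) * I η) z hz hI_int
    (fun x hx => le_of_lt (mul_pos (Real.rpow_pos_of_pos hx.1 _) (hI_pos x hx.1)))
  have hbig := htail.const_mul ((2:ℝ) ^ (1 - n₂))
  rw [mul_zero] at hbig
  apply tendsto_of_tendsto_of_tendsto_of_le_of_le' tendsto_const_nhds hbig
  · filter_upwards [self_mem_nhdsWithin] with t ht
    exact le_of_lt (mul_pos (Real.rpow_pos_of_pos ht _) (hI_pos t ht))
  · filter_upwards [self_mem_nhdsWithin,
      nhdsWithin_le_nhds (Iio_mem_nhds hz)] with t ht htz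
    have ht0 : 0 < t := ht
    have htz' : t < z := htz
    -- lower estimate for the tail integral
    have hhalf : 0 < t / 2 := by linarith
    have hkey : (t / 2) ^ (-n₂) * I t * (volume (Set.Ioo (t/2) t)).toReal ≤
        ∫ η in Set.Ioo (t/2) t, η ^ (-n₂) * I η := by
      apply setIntegral_ge_of_const_le_real measurableSet_Ioo
        (by rw [Real.volume_Ioo]; exact ENNReal.ofReal_ne_top)
      · intro x hx
        have hx0 : 0 < x := lt_trans hhalf hx.1
        have h1 : (t / 2) ^ (-n₂) ≤ x ^ (-n₂) :=
          Real.rpow_le_rpow (le_of_lt hhalf) (le_of_lt hx.1) (by linarith)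
        have h2 : I t ≤ I x := by
          rcases eq_or_lt_of_le (le_of_lt hx.2) with heq | hlt
          · rw [heq]
          · exact le_of_lt (hI_anti (Set.mem_Ioi.mpr hx0) (Set.mem_Ioi.mpr ht0) hlt)
        have := mul_le_mul h1 h2 (le_of_lt (hI_pos t ht0)) (le_of_lt (Real.rpow_pos_of_pos hx0 _))
        linarith
      · exact hI_int.mono_set (fun x hx => ⟨lt_trans hhalf hx.1, lt_trans hx.2 htz'⟩)
    have hvol : (volume (Set.Ioo (t/2) t)).toReal = t / 2 := by
      rw [Real.volume_Ioo, ENNReal.toReal_ofReal (by linarith)]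
      ring
    rw [hvol] at hkey
    have hmono : ∫ η in Set.Ioo (t/2) t, η ^ (-n₂) * I η ≤
        ∫ η in Set.Ioo 0 t, η ^ (-n₂) * I η := by
      apply setIntegral_mono_set
        (hI_int.mono_set (Set.Ioo_subset_Ioo le_rfl (le_of_lt htz')))
        ((ae_restrict_mem measurableSet_Ioo).mono (fun x hx =>
          le_of_lt (mul_pos (Real.rpow_pos_of_pos hx.1 _) (hI_pos x hx.1))))
        (HasSubset.Subset.eventuallyLE (Set.Ioo_subset_Ioo (le_of_lt hhalf) le_rfl))
    -- (t/2)^(-n₂) * I t * (t/2) = (t/2)^(1-n₂) * I t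
    have hid : (t / 2) ^ (-n₂) * I t * (t / 2) = (t / 2) ^ (1 - n₂) * I t := by
      rw [show (1 - n₂) = -n₂ + 1 by ring, Real.rpow_add hhalf, Real.rpow_one]
      ring
    have hid2 : t ^ (1 - n₂) * I t = 2 ^ (1 - n₂) * ((t / 2) ^ (1 - n₂) * I t) := by
      rw [Real.div_rpow (le_of_lt ht0) (by norm_num : (0:ℝ) ≤ 2)]
      have h2pos : (0:ℝ) < 2 ^ (1 - n₂) := Real.rpow_pos_of_pos (by norm_num) _
      field_simp
    rw [hid2]
    have h2pos : (0:ℝ) ≤ 2 ^ (1 - n₂) := le_of_lt (Real.rpow_pos_of_pos (by norm_num) _)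
    apply mul_le_mul_of_nonneg_left _ h2pos
    rw [← hid]
    exact le_trans hkey hmono

lemma aux_boundary (n₂ : ℝ) (I utld h : ℝ → ℝ) (κ₁ ε₁ z : ℝ)
    (hn₂0 : n₂ < 0) (hz : 0 < z) (hκ₁ : 0 < κ₁)
    (hI_pos : ∀ y : ℝ, 0 < y → 0 < I y)
    (hI_anti : StrictAntiOn I (Set.Ioi 0))
    (hI_cont : ContinuousOn I (Set.Ioi 0))
    (hI_int : IntegrableOn (fun η => η ^ (-n₂) * I η) (Set.Ioo 0 z) volume)
    (hh_bd : ∀ x : ℝ, 0 < x → |h x| ≤ (1 / κ₁ - 1) * (x * I x) + ε₁ * x) :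
    Tendsto (fun t : ℝ => t ^ (-n₂) * h t) (nhdsWithin 0 (Set.Ioi 0)) (nhds 0) := by
  have h1 := (aux_tIt_tendsto n₂ I z hn₂0 hz hI_pos hI_anti hI_cont hI_int).const_mul
    ((1 : ℝ) / κ₁ - 1)
  have h2 := (aux_rpow_tendsto_zero (1 - n₂) (by linarith)).const_mul ε₁
  rw [mul_zero] at h1 h2
  have hsum := h1.add h2
  rw [add_zero] at hsum
  refine squeeze_zero_norm' ?_ hsum
  filter_upwards [self_mem_nhdsWithin] with t ht
  have ht0 : (0:ℝ) < t := ht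
  have hrp : 0 < t ^ (-n₂) := Real.rpow_pos_of_pos ht0 _
  have hid : t ^ (-n₂) * t = t ^ (1 - n₂) := by
    rw [show (1 - n₂) = -n₂ + 1 by ring, Real.rpow_add ht0, Real.rpow_one]
  calc ‖t ^ (-n₂) * h t‖ = t ^ (-n₂) * |h t| := by
        rw [Real.norm_eq_abs, abs_mul, abs_of_pos hrp]
    _ ≤ t ^ (-n₂) * ((1 / κ₁ - 1) * (t * I t) + ε₁ * t) :=
        mul_le_mul_of_nonneg_left (hh_bd t ht0) (le_of_lt hrp)
    _ = (1 / κ₁ - 1) * (t ^ (1 - n₂) * I t) + ε₁ * t ^ (1 - n₂) := by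
        rw [← hid]; ring

section ftc
variable (n₂ : ℝ) (I utld h chat ehat : ℝ → ℝ) (κ₁ κ₂ ε₁ ε₂ z_S : ℝ)

lemma aux_ftc
    (hn₂0 : n₂ < 0)
    (hD : ∀ y : ℝ, 0 < y → HasDerivAt utld (-(I y)) y)
    (hκ₁ : 0 < κ₁) (hκ₁₂ : κ₁ < κ₂) (hκ₂ : κ₂ < 1) (hzS_pos : 0 < z_S)
    (hh₁ : ∀ z : ℝ, z_S < z → h z = utld (z / κ₁) - utld z + ε₁ * z)
    (hh₂ : ∀ z : ℝ, 0 < z → z ≤ z_S → h z = utld (z / κ₂) - utld z + ε₂ * z)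
    (hchat₁ : ∀ η : ℝ, z_S < η → chat η = (1 / κ₁) * I (η / κ₁))
    (hchat₂ : ∀ η : ℝ, 0 < η → η ≤ z_S → chat η = (1 / κ₂) * I (η / κ₂))
    (hehat₁ : ∀ η : ℝ, z_S < η → ehat η = ε₁)
    (hehat₂ : ∀ η : ℝ, 0 < η → η ≤ z_S → ehat η = ε₂)
    (hcont : ContinuousOn h (Set.Ioi 0))
    (hgi : ∀ z : ℝ, 0 < z → IntegrableOn
      (fun η => η ^ (-n₂) * (ehat η - chat η) - n₂ * (η ^ (-n₂ - 1) * h η) + η ^ (-n₂) * I η)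
      (Set.Ioo 0 z) volume) :
    ∀ a b : ℝ, 0 < a → a ≤ b →
      (∫ η in a..b, (η ^ (-n₂) * (ehat η - chat η) - n₂ * (η ^ (-n₂ - 1) * h η)
          + η ^ (-n₂) * I η))
        = b ^ (-n₂) * h b - a ^ (-n₂) * h a := by
  have hκ₂0 : 0 < κ₂ := lt_trans hκ₁ hκ₁₂
  set gfun : ℝ → ℝ := fun η => η ^ (-n₂) * (ehat η - chat η) - n₂ * (η ^ (-n₂ - 1) * h η)
      + η ^ (-n₂) * I η with hgfun
  set G : ℝ → ℝ := fun η => η ^ (-n₂) * h η with hG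
  have hGcont : ContinuousOn G (Set.Ioi 0) := (aux_crpow (-n₂)).mul hcont
  have hII : ∀ a b : ℝ, 0 < a → a ≤ b → IntervalIntegrable gfun volume a b := by
    intro a b ha hab
    rw [intervalIntegrable_iff_integrableOn_Ioc_of_le hab]
    exact (hgi (b + 1) (by linarith)).mono_set
      (fun x hx => ⟨lt_of_lt_of_le ha (le_of_lt hx.1), lt_of_le_of_lt hx.2 (by linarith)⟩)
  have piece : ∀ a b : ℝ, 0 < a → a ≤ b → (b ≤ z_S ∨ z_S ≤ a) →
      (∫ η in a..b, gfun η) = G b - G a := by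
    intro a b ha hab hcase
    apply intervalIntegral.integral_eq_sub_of_hasDeriv_right_of_le hab
      (hGcont.mono (fun x hx => lt_of_lt_of_le ha hx.1)) _ (hII a b ha hab)
    intro x hx
    have hx0 : 0 < x := lt_trans ha hx.1
    have hhd : HasDerivAt h
        ((if x ≤ z_S then ε₂ - (1 / κ₂) * I (x / κ₂) else ε₁ - (1 / κ₁) * I (x / κ₁)) + I x) x
        ∧ ehat x - chat x = (if x ≤ z_S then ε₂ - (1 / κ₂) * I (x / κ₂)
          else ε₁ - (1 / κ₁) * I (x / κ₁)) := by
      rcases hcase with hbz | hza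
      · have hxz : x < z_S := lt_of_lt_of_le hx.2 hbz
        rw [if_pos (le_of_lt hxz)]
        constructor
        · refine HasDerivAt.congr_of_eventuallyEq
            (aux_branch_deriv I utld hD κ₂ ε₂ hκ₂0 x hx0) ?_
          filter_upwards [Ioo_mem_nhds hx0 hxz] with t ht
          exact hh₂ t ht.1 (le_of_lt ht.2)
        · rw [hehat₂ x hx0 (le_of_lt hxz), hchat₂ x hx0 (le_of_lt hxz)]
      · have hxz : z_S < x := lt_of_le_of_lt hza hx.1
        rw [if_neg (not_le.mpr hxz)]
        constructor
        · refine HasDerivAt.congr_of_eventuallyEq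
            (aux_branch_deriv I utld hD κ₁ ε₁ hκ₁ x hx0) ?_
          filter_upwards [Ioi_mem_nhds hxz] with t ht
          exact hh₁ t ht
        · rw [hehat₁ x hxz, hchat₁ x hxz]
    obtain ⟨hhd', heval⟩ := hhd
    have hr : HasDerivAt (fun η : ℝ => η ^ (-n₂)) (-n₂ * x ^ (-n₂ - 1)) x :=
      Real.hasDerivAt_rpow_const (Or.inl (ne_of_gt hx0))
    have hmul := hr.mul hhd'
    have hval : gfun x = -n₂ * x ^ (-n₂ - 1) * h x + x ^ (-n₂) *
        ((if x ≤ z_S then ε₂ - 1 / κ₂ * I (x / κ₂) else ε₁ - 1 / κ₁ * I (x / κ₁)) + I x) := by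
      show x ^ (-n₂) * (ehat x - chat x) - n₂ * (x ^ (-n₂ - 1) * h x) + x ^ (-n₂) * I x = _
      rw [heval]; ring
    have : HasDerivAt G (gfun x) x := by rw [hval]; exact hmul
    exact this.hasDerivWithinAt
  intro a b ha hab
  rw [show (∫ η in a..b, (η ^ (-n₂) * (ehat η - chat η) - n₂ * (η ^ (-n₂ - 1) * h η)
      + η ^ (-n₂) * I η)) = ∫ η in a..b, gfun η from rfl]
  rcases le_or_gt b z_S with hbz | hzb
  · rw [piece a b ha hab (Or.inl hbz)]
  rcases le_or_gt z_S a with hza | haz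
  · rw [piece a b ha hab (Or.inr hza)]
  -- a < z_S < b
  have h1 := piece a z_S ha (le_of_lt haz) (Or.inl le_rfl)
  have h2 := piece z_S b hzS_pos (le_of_lt hzb) (Or.inr le_rfl)
  rw [← intervalIntegral.integral_add_adjacent_intervals
    (hII a z_S ha (le_of_lt haz)) (hII z_S b hzS_pos (le_of_lt hzb)), h1, h2]
  ring
end ftc

lemma aux_improper (n₂ : ℝ) (h gfun : ℝ → ℝ) (z : ℝ) (hz : 0 < z)
    (hgi : IntegrableOn gfun (Set.Ioo 0 z) volume)
    (hftc : ∀ t : ℝ, 0 < t → t < z →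
      (∫ η in t..z, gfun η) = z ^ (-n₂) * h z - t ^ (-n₂) * h t)
    (hbd : Tendsto (fun t : ℝ => t ^ (-n₂) * h t) (nhdsWithin 0 (Set.Ioi 0)) (nhds 0)) :
    ∫ η in Set.Ioo 0 z, gfun η = z ^ (-n₂) * h z := by
  set L : ℝ := ∫ η in Set.Ioo 0 z, gfun η with hL
  have heq : ∀ᶠ t in nhdsWithin 0 (Set.Ioi 0),
      L - (∫ η in Set.Ioo 0 t, gfun η) = z ^ (-n₂) * h z - t ^ (-n₂) * h t := by
    filter_upwards [self_mem_nhdsWithin, nhdsWithin_le_nhds (Iio_mem_nhds hz)] with t ht htz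
    have ht0 : (0:ℝ) < t := ht
    have htz' : t < z := htz
    have h1 : L = (∫ η in Set.Ioo 0 t, gfun η) + ∫ η in Set.Ioo t z, gfun η :=
      aux_split_s14 gfun t z ht0 htz' hgi
    have h2 : (∫ η in Set.Ioo t z, gfun η) = z ^ (-n₂) * h z - t ^ (-n₂) * h t := by
      rw [← integral_Ioc_eq_integral_Ioo, ← intervalIntegral.integral_of_le (le_of_lt htz')]
      exact hftc t ht0 htz'
    rw [h1, h2]; ring
  have T1 : Tendsto (fun t => L - (∫ η in Set.Ioo 0 t, gfun η))
      (nhdsWithin 0 (Set.Ioi 0)) (nhds (L - 0)) :=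
    tendsto_const_nhds.sub (aux_tail_signed gfun z hz hgi)
  have T2 : Tendsto (fun t : ℝ => z ^ (-n₂) * h z - t ^ (-n₂) * h t)
      (nhdsWithin 0 (Set.Ioi 0)) (nhds (z ^ (-n₂) * h z - 0)) :=
    tendsto_const_nhds.sub hbd
  have := tendsto_nhds_unique (T1.congr' heq) T2
  rw [sub_zero, sub_zero] at this
  exact this

/-- for every 0 < z ≤ ẑ, φ₂(z,z) = z^{−n₂}h(z) − ∫₀^z η^{−n₂}I(η)dη < 0. -/
theorem stmt_14
    (δ r θ n₁ n₂ : ℝ)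
    (hδ : 0 < δ) (hr : 0 < r) (hθ : θ ≠ 0)
    (hn₂0 : n₂ < 0) (hn₁1 : 1 < n₁)
    (hroot₁ : θ ^ 2 / 2 * n₁ ^ 2 + (δ - r - θ ^ 2 / 2) * n₁ - δ = 0)
    (hroot₂ : θ ^ 2 / 2 * n₂ ^ 2 + (δ - r - θ ^ 2 / 2) * n₂ - δ = 0)
    (u u' I utld : ℝ → ℝ)
    (hu_mono : StrictMonoOn u (Set.Ici 0))
    (hu_conc : StrictConcaveOn ℝ (Set.Ici 0) u)
    (hu_cont : ContinuousOn u (Set.Ici 0))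
    (hu_deriv : ∀ c : ℝ, 0 < c → HasDerivAt u (u' c) c)
    (hu'_cont : ContinuousOn u' (Set.Ioi 0))
    (hu'_top : Filter.Tendsto u' Filter.atTop (nhds 0))
    (hu'_zero : Filter.Tendsto u' (nhdsWithin 0 (Set.Ioi 0)) Filter.atTop)
    (hI_pos : ∀ y : ℝ, 0 < y → 0 < I y)
    (hI_left : ∀ y : ℝ, 0 < y → u' (I y) = y)
    (hI_right : ∀ c : ℝ, 0 < c → I (u' c) = c)
    (hI_anti : StrictAntiOn I (Set.Ioi 0))
    (hI_cont : ContinuousOn I (Set.Ioi 0))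
    (hI_zero : Filter.Tendsto I (nhdsWithin 0 (Set.Ioi 0)) Filter.atTop)
    (hI_top : Filter.Tendsto I Filter.atTop (nhds 0))
    (hutld : ∀ y : ℝ, 0 < y → utld y = u (I y) - y * I y)
    (ε₁ ε₂ κ₁ κ₂ : ℝ)
    (hε₂ : 0 < ε₂) (hε₁₂ : ε₂ < ε₁)
    (hκ₁ : 0 < κ₁) (hκ₁₂ : κ₁ < κ₂) (hκ₂ : κ₂ < 1)
    (z_S : ℝ) (hzS_pos : 0 < z_S)
    (hzS_zero : (1 / z_S) * (utld (z_S / κ₁) - utld (z_S / κ₂) + z_S * (ε₁ - ε₂)) = 0)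
    (hzS_uniq : ∀ y : ℝ, 0 < y →
      (1 / y) * (utld (y / κ₁) - utld (y / κ₂) + y * (ε₁ - ε₂)) = 0 → y = z_S)
    (h : ℝ → ℝ)
    (hh₁ : ∀ z : ℝ, z_S < z → h z = utld (z / κ₁) - utld z + ε₁ * z)
    (hh₂ : ∀ z : ℝ, 0 < z → z ≤ z_S → h z = utld (z / κ₂) - utld z + ε₂ * z)
    (zhat : ℝ) (hzhat_pos : 0 < zhat) (hzhat_zero : h zhat = 0)
    (hzhat_uniq : ∀ z : ℝ, 0 < z → h z = 0 → z = zhat)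
    (hI_int : ∀ y : ℝ, 0 < y →
      MeasureTheory.IntegrableOn (fun η => η ^ (-n₂) * I η) (Set.Ioo 0 y) MeasureTheory.volume)
    (chat ehat : ℝ → ℝ)
    (hchat₁ : ∀ η : ℝ, z_S < η → chat η = (1 / κ₁) * I (η / κ₁))
    (hchat₂ : ∀ η : ℝ, 0 < η → η ≤ z_S → chat η = (1 / κ₂) * I (η / κ₂))
    (hehat₁ : ∀ η : ℝ, z_S < η → ehat η = ε₁)
    (hehat₂ : ∀ η : ℝ, 0 < η → η ≤ z_S → ehat η = ε₂)
    (φ₁ φ₂ : ℝ → ℝ → ℝ)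
    (hφ₁ : ∀ z₁ z₂ : ℝ, 0 < z₁ → 0 < z₂ →
      φ₁ z₁ z₂ = (∫ η in Set.Ioi z₂, η ^ (-n₁) * (ehat η - chat η)) -
        n₁ * ∫ η in Set.Ioi z₁, η ^ (-n₁ - 1) * h η)
    (hφ₂ : ∀ z₁ z₂ : ℝ, 0 < z₁ → 0 < z₂ →
      φ₂ z₁ z₂ = (∫ η in Set.Ioo 0 z₂, η ^ (-n₂) * (ehat η - chat η)) -
        n₂ * ∫ η in Set.Ioo 0 z₁, η ^ (-n₂ - 1) * h η)
    :
    ∀ z : ℝ, 0 < z → z ≤ zhat →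
      φ₂ z z = z ^ (-n₂) * h z - (∫ η in Set.Ioo 0 z, η ^ (-n₂) * I η) ∧ φ₂ z z < 0 := by
  have hκ₂0 : 0 < κ₂ := lt_trans hκ₁ hκ₁₂
  have hI_surj := aux_I_surj I hI_cont hI_zero hI_top
  obtain ⟨hu'_anti, hu'_pos⟩ := aux_u'_anti I u' hI_anti hI_left hI_surj
  have hsand := aux_sandwich u u' I utld hu_cont hu_deriv hI_pos hI_left hI_anti hu'_anti hutld
  have hD := aux_utld_deriv I utld hI_cont hsand
  have hutld_cont : ContinuousOn utld (Set.Ioi 0) := fun x hx =>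
    ((hD x hx).continuousAt).continuousWithinAt
  have hmatch := aux_match utld κ₁ κ₂ ε₁ ε₂ z_S hκ₁ hκ₂0 hzS_pos hzS_zero
  have hhcont := aux_h_cont I utld κ₁ κ₂ ε₁ ε₂ z_S h hD hκ₁ hκ₂0 hzS_pos hmatch hh₁ hh₂
  have hchat_bd := aux_chat_bound I κ₁ κ₂ z_S chat hI_pos hI_anti hκ₁ hκ₁₂ hκ₂ hzS_pos
    hchat₁ hchat₂
  have hh_bd := aux_h_bound I utld κ₁ κ₂ ε₁ ε₂ z_S h hI_pos hsand hκ₁ hκ₁₂ hκ₂ hε₂ hε₁₂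
    hzS_pos hh₁ hh₂
  have hintA := aux_int_A n₂ I κ₁ κ₂ ε₁ ε₂ z_S chat ehat hn₂0 hI_pos hI_cont hI_int
    hκ₁ hκ₁₂ hκ₂ hε₂ hε₁₂ hzS_pos hchat₁ hchat₂ hehat₁ hehat₂ hchat_bd
  have hintB := aux_int_B n₂ I utld κ₁ κ₂ ε₁ ε₂ z_S h hn₂0 hI_pos hutld_cont hI_int
    hκ₁ hκ₁₂ hκ₂ hzS_pos hh₁ hh₂ hh_bd
  have hgi : ∀ z : ℝ, 0 < z → IntegrableOn
      (fun η => η ^ (-n₂) * (ehat η - chat η) - n₂ * (η ^ (-n₂ - 1) * h η) + η ^ (-n₂) * I η)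
      (Set.Ioo 0 z) volume := fun z hz =>
    ((hintA z hz).sub ((hintB z hz).const_mul n₂)).add (hI_int z hz)
  have hftc := aux_ftc n₂ I utld h chat ehat κ₁ κ₂ ε₁ ε₂ z_S hn₂0 hD hκ₁ hκ₁₂ hκ₂
    hzS_pos hh₁ hh₂ hchat₁ hchat₂ hehat₁ hehat₂ hhcont hgi
  have hbd := aux_boundary n₂ I utld h κ₁ ε₁ 1 hn₂0 one_pos hκ₁ hI_pos hI_anti hI_cont
    (hI_int 1 one_pos) hh_bd
  have hneg_small := aux_h_neg_small I utld κ₂ ε₂ z_S h hI_zero hsand hκ₂0 hκ₂ hε₂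
    hzS_pos hh₂
  have hnonpos := aux_h_nonpos h zhat hzhat_pos hzhat_zero hzhat_uniq hhcont hneg_small
  intro z hz hzle
  have hidentity : (∫ η in Set.Ioo 0 z,
      (η ^ (-n₂) * (ehat η - chat η) - n₂ * (η ^ (-n₂ - 1) * h η) + η ^ (-n₂) * I η))
      = z ^ (-n₂) * h z :=
    aux_improper n₂ h _ z hz (hgi z hz) (fun t ht htz => hftc t z ht (le_of_lt htz)) hbd
  have hA := hintA z hz
  have hB := hintB z hz
  have hC := hI_int z hz
  have hsplit : (∫ η in Set.Ioo 0 z,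
      (η ^ (-n₂) * (ehat η - chat η) - n₂ * (η ^ (-n₂ - 1) * h η) + η ^ (-n₂) * I η))
      = (∫ η in Set.Ioo 0 z, η ^ (-n₂) * (ehat η - chat η))
        - n₂ * (∫ η in Set.Ioo 0 z, η ^ (-n₂ - 1) * h η)
        + ∫ η in Set.Ioo 0 z, η ^ (-n₂) * I η := by
    have hAB : Integrable
        (fun η => η ^ (-n₂) * (ehat η - chat η) - n₂ * (η ^ (-n₂ - 1) * h η))
        (volume.restrict (Set.Ioo 0 z)) := hA.sub (hB.const_mul n₂)
    rw [integral_add hAB hC, integral_sub hA (hB.const_mul n₂), integral_const_mul]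
  have hφ := hφ₂ z z hz hz
  have hCpos : 0 < ∫ η in Set.Ioo 0 z, η ^ (-n₂) * I η := by
    rw [setIntegral_pos_iff_support_of_nonneg_ae
      ((ae_restrict_mem measurableSet_Ioo).mono (fun x hx =>
        le_of_lt (mul_pos (Real.rpow_pos_of_pos hx.1 _) (hI_pos x hx.1)))) hC]
    have hsub : Set.Ioo 0 z ⊆ Function.support (fun η => η ^ (-n₂) * I η) ∩ Set.Ioo 0 z :=
      fun x hx => ⟨ne_of_gt (mul_pos (Real.rpow_pos_of_pos hx.1 _) (hI_pos x hx.1)), hx⟩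
    refine lt_of_lt_of_le ?_ (measure_mono hsub)
    rw [Real.volume_Ioo]
    simpa using ENNReal.ofReal_pos.mpr (by linarith : (0:ℝ) < z - 0)
  have hmain : φ₂ z z = z ^ (-n₂) * h z - ∫ η in Set.Ioo 0 z, η ^ (-n₂) * I η := by
    rw [hφ]; linarith [hsplit, hidentity]
  refine ⟨hmain, ?_⟩
  rw [hmain]
  have hhz : h z ≤ 0 := hnonpos z hz hzle
  have hzn : 0 < z ^ (-n₂) := Real.rpow_pos_of_pos hz _
  nlinarith
end
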